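/- arXiv:2509.23929 — 6 statements merged into one kernel-verified Lean document; each statement's English description precedes it below -/
import Mathlib

section
/- For every positive integer k there exists an integer n > k such that for every 2-coloring (say red/blue) of the edges of the Erdős–Hajnal shift graph G_n, there is a subgraph of G_n all of whose edges receive the same color and which is isomorphic to the Erdős–Hajnal shift graph G_k. (In other words, the sequence {G_k} of Erdős–Hajnal shift graphs is a Ramsey sequence.) -/
/-- Vertices of the Erdős–Hajnal shift graph `G k`: pairs `(i, j)` of integers with
`1 ≤ i < j ≤ 2 ^ k + 1`. -/
def EHVert (k : ℕ) : Type :=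
  {p : ℕ × ℕ // 1 ≤ p.1 ∧ p.1 < p.2 ∧ p.2 ≤ 2 ^ k + 1}

/-- The Erdős–Hajnal shift graph `G k`: vertices `(i, j)` and `(l, m)` are adjacent
iff `j = l` or `m = i`. -/
def EHShift (k : ℕ) : SimpleGraph (EHVert k) where
  Adj p q := p.val.2 = q.val.1 ∨ q.val.2 = p.val.1
  symm := ⟨fun _ _ h => h.symm⟩
  loopless := ⟨by rintro ⟨⟨i, j⟩, h1, h2, h3⟩ h; dsimp at h; omega⟩

/-- `C`-monochromatic copy of `G` in `H` (as a subgraph): an injective map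
preserving adjacency such that all images of edges of `G` receive the same color. -/
def HasMonoCopy {V W : Type*} (G : SimpleGraph V) (H : SimpleGraph W)
    (C : Sym2 W → Bool) : Prop :=
  ∃ f : V → W, Function.Injective f ∧ (∀ u v, G.Adj u v → H.Adj (f u) (f v)) ∧
    ∃ c : Bool, ∀ u v, G.Adj u v → C s(f u, f v) = c


/-- Pigeonhole: a set of size `2m` contains a monochromatic subset of size `m`. -/
lemma eh_pigeon (m : ℕ) (f : ℕ → Bool) (S : Finset ℕ) (h : 2 * m ≤ S.card) :
    ∃ T ⊆ S, T.card = m ∧ ∃ b, ∀ x ∈ T, f x = b := by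
  rcases le_or_gt m ((S.filter (fun x => f x = true)).card) with h1 | h1
  · obtain ⟨T, hT, hc⟩ := Finset.exists_subset_card_eq (n := m) h1
    exact ⟨T, hT.trans (Finset.filter_subset _ _), hc, true,
      fun x hx => (Finset.mem_filter.1 (hT hx)).2⟩
  · have hsum := Finset.card_filter_add_card_filter_not
      (s := S) (p := fun x => f x = true)
    obtain ⟨T, hT, hc⟩ := Finset.exists_subset_card_eq
      (s := S.filter (fun x => ¬ f x = true)) (n := m) (by omega)
    refine ⟨T, hT.trans (Finset.filter_subset _ _), hc, false, fun x hx => ?_⟩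
    have := (Finset.mem_filter.1 (hT hx)).2
    simpa using this

/-- Pre-homogeneous sets for pair colorings: the color depends only on the smaller element. -/
lemma eh_prehom2 : ∀ t : ℕ, ∃ N : ℕ, ∀ (c : ℕ → ℕ → Bool) (S : Finset ℕ), N ≤ S.card →
    ∃ T ⊆ S, T.card = t ∧
      ∀ x ∈ T, ∀ y ∈ T, ∀ z ∈ T, x < y → x < z → c x y = c x z := by
  intro t
  induction t with
  | zero => exact ⟨0, fun c S _ => ⟨∅, by simp, by simp, by simp⟩⟩
  | succ t ih =>
    obtain ⟨N, hN⟩ := ih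
    refine ⟨2 * N + 1, fun c S hS => ?_⟩
    have hne : S.Nonempty := Finset.card_pos.1 (by omega)
    set v := S.min' hne with hv
    have hvS : v ∈ S := S.min'_mem hne
    have hcard : 2 * N ≤ (S.erase v).card := by
      rw [Finset.card_erase_of_mem hvS]; omega
    obtain ⟨U, hUsub, hUcard, b, hUb⟩ := eh_pigeon N (fun y => c v y) _ hcard
    obtain ⟨T', hT'U, hT'c, hT'pre⟩ := hN c U (le_of_eq hUcard.symm)
    have hvlt : ∀ w ∈ T', v < w := by
      intro w hw
      have hwE : w ∈ S.erase v := hUsub (hT'U hw)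
      exact lt_of_le_of_ne (S.min'_le w (Finset.mem_of_mem_erase hwE))
        (Ne.symm (Finset.ne_of_mem_erase hwE))
    have hvnot : v ∉ T' := fun h => lt_irrefl v (hvlt v h)
    refine ⟨insert v T', ?_, ?_, ?_⟩
    · intro x hx
      rcases Finset.mem_insert.1 hx with h | h
      · exact h ▸ hvS
      · exact Finset.mem_of_mem_erase (hUsub (hT'U h))
    · rw [Finset.card_insert_of_notMem hvnot, hT'c]
    · intro x hx y hy z hz hxy hxz
      rcases Finset.mem_insert.1 hx with h | h
      · subst h
        have hy' : y ∈ T' := (Finset.mem_insert.1 hy).resolve_left (by omega)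
        have hz' : z ∈ T' := (Finset.mem_insert.1 hz).resolve_left (by omega)
        rw [hUb y (hT'U hy'), hUb z (hT'U hz')]
      · have hxv := hvlt x h
        have hy' : y ∈ T' := (Finset.mem_insert.1 hy).resolve_left (by omega)
        have hz' : z ∈ T' := (Finset.mem_insert.1 hz).resolve_left (by omega)
        exact hT'pre x h y hy' z hz' hxy hxz

/-- Ramsey's theorem for pairs. -/
lemma eh_ramsey2 (m : ℕ) : ∃ N, ∀ (c : ℕ → ℕ → Bool) (S : Finset ℕ), N ≤ S.card →
    ∃ T ⊆ S, T.card = m ∧ ∃ b, ∀ x ∈ T, ∀ y ∈ T, x < y → c x y = b := by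
  obtain ⟨N, hN⟩ := eh_prehom2 (2 * m + 1)
  refine ⟨N, fun c S hS => ?_⟩
  obtain ⟨T0, hT0S, hT0c, hpre⟩ := hN c S hS
  have hne : T0.Nonempty := Finset.card_pos.1 (by omega)
  set M := T0.max' hne with hM
  have hMT0 : M ∈ T0 := T0.max'_mem hne
  have hec : 2 * m ≤ (T0.erase M).card := by rw [Finset.card_erase_of_mem hMT0]; omega
  obtain ⟨T, hTsub, hTc, b, hb⟩ := eh_pigeon m (fun x => c x M) _ hec
  refine ⟨T, (hTsub.trans (Finset.erase_subset _ _)).trans hT0S, hTc, b,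
    fun x hx y hy hxy => ?_⟩
  have hx0 : x ∈ T0 := Finset.mem_of_mem_erase (hTsub hx)
  have hy0 : y ∈ T0 := Finset.mem_of_mem_erase (hTsub hy)
  have hxM : x < M := lt_of_le_of_ne (T0.le_max' x hx0) (Finset.ne_of_mem_erase (hTsub hx))
  rw [hpre x hx0 y hy0 M hMT0 hxy hxM]
  exact hb x hx

/-- Pre-homogeneous sets for triple colorings: the color depends only on the two
smaller elements. -/
lemma eh_prehom3 : ∀ t : ℕ, ∃ N, ∀ (c : ℕ → ℕ → ℕ → Bool) (S : Finset ℕ), N ≤ S.card →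
    ∃ T ⊆ S, T.card = t ∧ ∀ x ∈ T, ∀ y ∈ T, ∀ z ∈ T, ∀ w ∈ T,
      x < y → y < z → y < w → c x y z = c x y w := by
  intro t
  induction t with
  | zero => exact ⟨0, fun c S _ => ⟨∅, by simp, by simp, by simp⟩⟩
  | succ t ih =>
    obtain ⟨N1, h1⟩ := ih
    obtain ⟨N2, h2⟩ := eh_prehom2 N1
    refine ⟨N2 + 1, fun c S hS => ?_⟩
    have hne : S.Nonempty := Finset.card_pos.1 (by omega)
    set v := S.min' hne with hv
    have hvS : v ∈ S := S.min'_mem hne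
    have hec : N2 ≤ (S.erase v).card := by rw [Finset.card_erase_of_mem hvS]; omega
    obtain ⟨U, hUsub, hUcard, hUpre⟩ := h2 (fun y z => c v y z) _ hec
    obtain ⟨T', hT'U, hT'c, hT'pre⟩ := h1 c U (le_of_eq hUcard.symm)
    have hvlt : ∀ w ∈ T', v < w := by
      intro w hw
      have hwE : w ∈ S.erase v := hUsub (hT'U hw)
      exact lt_of_le_of_ne (S.min'_le w (Finset.mem_of_mem_erase hwE))
        (Ne.symm (Finset.ne_of_mem_erase hwE))
    have hvnot : v ∉ T' := fun h => lt_irrefl v (hvlt v h)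
    refine ⟨insert v T', ?_, ?_, ?_⟩
    · intro x hx
      rcases Finset.mem_insert.1 hx with h | h
      · exact h ▸ hvS
      · exact Finset.mem_of_mem_erase (hUsub (hT'U h))
    · rw [Finset.card_insert_of_notMem hvnot, hT'c]
    · intro x hx y hy z hz w hw hxy hyz hyw
      rcases Finset.mem_insert.1 hx with h | h
      · subst h
        have hy' : y ∈ T' := (Finset.mem_insert.1 hy).resolve_left (by omega)
        have hz' : z ∈ T' := (Finset.mem_insert.1 hz).resolve_left
          (by have := hvlt y hy'; omega)
        have hw' : w ∈ T' := (Finset.mem_insert.1 hw).resolve_left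
          (by have := hvlt y hy'; omega)
        exact hUpre y (hT'U hy') z (hT'U hz') w (hT'U hw') hyz hyw
      · have hxv := hvlt x h
        have hy' : y ∈ T' := (Finset.mem_insert.1 hy).resolve_left (by omega)
        have hz' : z ∈ T' := (Finset.mem_insert.1 hz).resolve_left (by omega)
        have hw' : w ∈ T' := (Finset.mem_insert.1 hw).resolve_left (by omega)
        exact hT'pre x h y hy' z hz' w hw' hxy hyz hyw

/-- Ramsey's theorem for triples. -/
lemma eh_ramsey3 (m : ℕ) : ∃ N, ∀ (c : ℕ → ℕ → ℕ → Bool) (S : Finset ℕ), N ≤ S.card →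
    ∃ T ⊆ S, T.card = m ∧ ∃ b, ∀ x ∈ T, ∀ y ∈ T, ∀ z ∈ T,
      x < y → y < z → c x y z = b := by
  obtain ⟨N2, h2⟩ := eh_ramsey2 m
  obtain ⟨N3, h3⟩ := eh_prehom3 (N2 + 1)
  refine ⟨N3, fun c S hS => ?_⟩
  obtain ⟨T0, hT0S, hT0c, hpre⟩ := h3 c S hS
  have hne : T0.Nonempty := Finset.card_pos.1 (by omega)
  set M := T0.max' hne with hM
  have hMT0 : M ∈ T0 := T0.max'_mem hne
  have hec : N2 ≤ (T0.erase M).card := by rw [Finset.card_erase_of_mem hMT0]; omega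
  obtain ⟨T, hTsub, hTc, b, hb⟩ := h2 (fun x y => c x y M) _ hec
  refine ⟨T, (hTsub.trans (Finset.erase_subset _ _)).trans hT0S, hTc, b,
    fun x hx y hy z hz hxy hyz => ?_⟩
  have hx0 : x ∈ T0 := Finset.mem_of_mem_erase (hTsub hx)
  have hy0 : y ∈ T0 := Finset.mem_of_mem_erase (hTsub hy)
  have hz0 : z ∈ T0 := Finset.mem_of_mem_erase (hTsub hz)
  have hyM : y < M := lt_of_le_of_ne (T0.le_max' y hy0) (Finset.ne_of_mem_erase (hTsub hy))
  rw [hpre x hx0 y hy0 z hz0 M hMT0 hxy hyz hyM]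
  exact hb x hx y hy hxy

/-- The sequence of Erdős–Hajnal shift graphs is a Ramsey sequence: for every positive
integer `k` there is `n > k` such that every red-blue edge coloring of `G n` contains a
monochromatic subgraph isomorphic to `G k`. -/
theorem ehShift_ramsey_sequence (k : ℕ) (hk : 1 ≤ k) :
    ∃ n : ℕ, n > k ∧
      ∀ C : Sym2 (EHVert n) → Bool, HasMonoCopy (EHShift k) (EHShift n) C := by
  set m := 2 ^ k + 1 with hm
  obtain ⟨N, hN⟩ := eh_ramsey3 m
  set n := max (k + 1) N with hn
  refine ⟨n, by have := le_max_left (k + 1) N; omega, ?_⟩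
  intro C
  have hNn : N ≤ 2 ^ n + 1 := by
    have h1 : N ≤ n := le_max_right _ _
    have h2 : n < 2 ^ n := Nat.lt_two_pow_self
    omega
  set c : ℕ → ℕ → ℕ → Bool := fun x y z =>
    if h : 1 ≤ x ∧ x < y ∧ y < z ∧ z ≤ 2 ^ n + 1 then
      C s(⟨(x, y), h.1, h.2.1, h.2.2.1.le.trans h.2.2.2⟩,
          ⟨(y, z), h.1.trans h.2.1.le, h.2.2.1, h.2.2.2⟩)
    else true with hc
  have hScard : N ≤ (Finset.Icc 1 (2 ^ n + 1)).card := by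
    rw [Nat.card_Icc]; omega
  obtain ⟨T, hTS, hTc, b, hb⟩ := hN c (Finset.Icc 1 (2 ^ n + 1)) hScard
  set e := T.orderEmbOfFin hTc with he
  set g : ℕ → ℕ := fun a => if h : a < m then e ⟨a, h⟩ else 0 with hg
  have hgmem : ∀ a, a < m → g a ∈ T := by
    intro a ha; simp only [hg, dif_pos ha]; exact T.orderEmbOfFin_mem hTc _
  have hgbound : ∀ a, a < m → 1 ≤ g a ∧ g a ≤ 2 ^ n + 1 := by
    intro a ha
    have := Finset.mem_Icc.1 (hTS (hgmem a ha))
    exact this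
  have hgmono : ∀ a a', a < a' → a' < m → g a < g a' := by
    intro a a' haa ha'
    have ha : a < m := haa.trans ha'
    simp only [hg, dif_pos ha, dif_pos ha']
    exact e.strictMono (by exact haa)
  have hginj : ∀ a a', a < m → a' < m → g a = g a' → a = a' := by
    intro a a' ha ha' hEq
    rcases lt_trichotomy a a' with h | h | h
    · exact absurd hEq (hgmono a a' h ha').ne
    · exact h
    · exact absurd hEq.symm (hgmono a' a h ha).ne
  -- the embedding
  have hidx : ∀ (p : EHVert k), p.val.1 - 1 < m ∧ p.val.2 - 1 < m ∧
      p.val.1 - 1 < p.val.2 - 1 := by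
    rintro ⟨⟨i, j⟩, h1, h2, h3⟩; dsimp; omega
  let f : EHVert k → EHVert n := fun p =>
    ⟨(g (p.val.1 - 1), g (p.val.2 - 1)), by
      obtain ⟨hi, hj, hij⟩ := hidx p
      exact ⟨(hgbound _ hi).1, hgmono _ _ hij hj, (hgbound _ hj).2⟩⟩
  have hkey : ∀ x y z, x ∈ T → y ∈ T → z ∈ T → x < y → y < z →
      ∀ (p q : EHVert n), p.val = (x, y) → q.val = (y, z) → C s(p, q) = b := by
    intro x y z hx hy hz hxy hyz p q hp hq
    have hxb := Finset.mem_Icc.1 (hTS hx)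
    have hzb := Finset.mem_Icc.1 (hTS hz)
    have hcond : 1 ≤ x ∧ x < y ∧ y < z ∧ z ≤ 2 ^ n + 1 := ⟨hxb.1, hxy, hyz, hzb.2⟩
    have hcv : c x y z = b := hb x hx y hy z hz hxy hyz
    rw [hc] at hcv
    simp only [dif_pos hcond] at hcv
    have hp' : p = ⟨(x, y), hcond.1, hcond.2.1, hcond.2.2.1.le.trans hcond.2.2.2⟩ :=
      Subtype.ext hp
    have hq' : q = ⟨(y, z), hcond.1.trans hcond.2.1.le, hcond.2.2.1, hcond.2.2.2⟩ :=
      Subtype.ext hq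
    rw [hp', hq']
    exact hcv
  refine ⟨f, ?_, ?_, b, ?_⟩
  · rintro ⟨⟨i, j⟩, hu⟩ ⟨⟨l, r⟩, hv⟩ hEq
    have h1 : g (i - 1) = g (l - 1) := congrArg (fun w : EHVert n => w.val.1) hEq
    have h2 : g (j - 1) = g (r - 1) := congrArg (fun w : EHVert n => w.val.2) hEq
    have e1 := hginj _ _ (by dsimp at hu ⊢; omega) (by dsimp at hv ⊢; omega) h1
    have e2 := hginj _ _ (by dsimp at hu ⊢; omega) (by dsimp at hv ⊢; omega) h2
    apply Subtype.ext
    dsimp at hu hv ⊢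
    have : i = l ∧ j = r := by omega
    rw [this.1, this.2]
  · rintro ⟨⟨i, j⟩, hu⟩ ⟨⟨l, r⟩, hv⟩ (h | h)
    · exact Or.inl (congrArg (fun a => g (a - 1)) h)
    · exact Or.inr (congrArg (fun a => g (a - 1)) h)
  · rintro ⟨⟨i, j⟩, hu⟩ ⟨⟨l, r⟩, hv⟩ (h | h)
    · -- j = l : triple (i, j, r)
      dsimp at h hu hv
      subst h
      refine hkey (g (i - 1)) (g (j - 1)) (g (r - 1))
        (hgmem _ (by omega)) (hgmem _ (by omega)) (hgmem _ (by omega))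
        (hgmono _ _ (by omega) (by omega)) (hgmono _ _ (by omega) (by omega))
        (f ⟨(i, j), hu⟩) (f ⟨(j, r), hv⟩) rfl rfl
    · -- r = i : triple (l, r, j) after substituting i := r
      dsimp at h hu hv
      subst h
      rw [Sym2.eq_swap]
      refine hkey (g (l - 1)) (g (r - 1)) (g (j - 1))
        (hgmem _ (by omega)) (hgmem _ (by omega)) (hgmem _ (by omega))
        (hgmono _ _ (by omega) (by omega)) (hgmono _ _ (by omega) (by omega))
        (f ⟨(l, r), hv⟩) (f ⟨(r, j), hu⟩) rfl rfl
end

section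
/- Define a sequence of positive integers by S_1 = 2 and S_n = 2^{S_{n-1}+2} for n > 1. For every positive integer k, set N = S_{2^{k+1}}. Then every 2-coloring (red/blue) of the edges of the Erdős–Hajnal shift graph G_N contains a monochromatic subgraph isomorphic to the Erdős–Hajnal shift graph G_k. -/
/-- The recurrent sequence `S₁ = 2`, `Sₙ = 2 ^ (S_{n-1} + 2)` for `n > 1`
(the value at `0` is junk). -/
def Sseq : ℕ → ℕ
  | 0 => 0
  | 1 => 2
  | n + 2 => 2 ^ (Sseq (n + 1) + 2)
/-- Keep the larger of the two halves of `R` under the boolean split `f`. -/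
def halveB (f : ℕ → Bool) (R : Finset ℕ) : Finset ℕ :=
  if (R.filter fun m => f m = true).card < (R.filter fun m => ¬ (f m = true)).card
  then R.filter (fun m => ¬ (f m = true)) else R.filter (fun m => f m = true)

lemma halveB_subset (f : ℕ → Bool) (R : Finset ℕ) : halveB f R ⊆ R := by
  unfold halveB; split <;> exact Finset.filter_subset _ _

lemma halveB_card (f : ℕ → Bool) (R : Finset ℕ) : R.card ≤ 2 * (halveB f R).card := by
  have h := Finset.card_filter_add_card_filter_not (s := R)
    (p := fun m => f m = true)
  unfold halveB; split <;> omega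

lemma halveB_const (f : ℕ → Bool) (R : Finset ℕ) :
    ∀ m ∈ halveB f R, ∀ m' ∈ halveB f R, f m = f m' := by
  unfold halveB; split <;> intro m hm m' hm' <;>
    simp only [Finset.mem_filter, Bool.not_eq_true] at hm hm' <;>
    rw [hm.2, hm'.2]

/-- Iteratively refine `R` so that `c y x ·` is constant on the result for each `y` in the list. -/
def refineS (c : ℕ → ℕ → ℕ → Bool) (x : ℕ) : List ℕ → Finset ℕ → Finset ℕ
  | [], R => R
  | y :: ys, R => refineS c x ys (halveB (fun m => c y x m) R)

lemma refineS_subset (c : ℕ → ℕ → ℕ → Bool) (x : ℕ) :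
    ∀ (l : List ℕ) (R : Finset ℕ), refineS c x l R ⊆ R := by
  intro l
  induction l with
  | nil => intro R; exact Finset.Subset.refl R
  | cons y ys ih =>
      intro R
      exact Finset.Subset.trans (ih (halveB (fun m => c y x m) R)) (halveB_subset _ _)

lemma refineS_card (c : ℕ → ℕ → ℕ → Bool) (x : ℕ) :
    ∀ (l : List ℕ) (R : Finset ℕ), R.card / 2 ^ l.length ≤ (refineS c x l R).card := by
  intro l
  induction l with
  | nil => intro R; show R.card / 2 ^ 0 ≤ R.card; simp
  | cons y ys ih =>
      intro R
      have h1 := halveB_card (fun m => c y x m) R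
      have h2 := ih (halveB (fun m => c y x m) R)
      calc R.card / 2 ^ (y :: ys).length
          = R.card / 2 / 2 ^ ys.length := by
            rw [Nat.div_div_eq_div_mul]
            congr 1
            simp [List.length_cons, pow_succ, mul_comm]
        _ ≤ (halveB (fun m => c y x m) R).card / 2 ^ ys.length := by
            apply Nat.div_le_div_right
            omega
        _ ≤ _ := h2

lemma refineS_const (c : ℕ → ℕ → ℕ → Bool) (x : ℕ) :
    ∀ (l : List ℕ) (R : Finset ℕ) (y : ℕ), y ∈ l →
      ∀ m ∈ refineS c x l R, ∀ m' ∈ refineS c x l R, c y x m = c y x m' := by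
  intro l
  induction l with
  | nil => intro R y hy; simp at hy
  | cons z zs ih =>
      intro R y hy m hm m' hm'
      rcases List.mem_cons.mp hy with h | h
      · subst h
        have hs := refineS_subset c x zs (halveB (fun m => c y x m) R)
        exact halveB_const _ _ m (hs hm) m' (hs hm')
      · exact ih _ y h m hm m' hm'
/-- Pre-homogeneous sequence extraction for triple colorings. -/
lemma prehomog (c : ℕ → ℕ → ℕ → Bool) (L : ℕ) :
    ∀ (r : ℕ) (xs : List ℕ) (R : Finset ℕ),
      xs.length + r ≤ L →
      xs.Pairwise (· < ·) →
      (∀ m ∈ R, ∀ y ∈ xs, y < m) →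
      (∀ y ∈ xs, ∀ z ∈ xs, y < z →
        ∀ m m', (m ∈ R ∨ m ∈ xs) → (m' ∈ R ∨ m' ∈ xs) → z < m → z < m' →
          c y z m = c y z m') →
      2 ^ (r * (L + 1)) ≤ R.card →
      ∃ ys : List ℕ, ys.length = r ∧ (∀ a ∈ ys, a ∈ R) ∧
        (xs ++ ys).Pairwise (· < ·) ∧
        (∀ y ∈ xs ++ ys, ∀ z ∈ xs ++ ys, y < z →
          ∀ m ∈ xs ++ ys, ∀ m' ∈ xs ++ ys, z < m → z < m' → c y z m = c y z m') := by
  intro r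
  induction r with
  | zero =>
      intro xs R _ hpw _ hyp _
      refine ⟨[], rfl, by simp, by simpa using hpw, ?_⟩
      simp only [List.append_nil]
      intro y hy z hz hyz m hm m' hm' hzm hzm'
      exact hyp y hy z hz hyz m m' (Or.inr hm) (Or.inr hm') hzm hzm'
  | succ r ih =>
      intro xs R hlen hpw hbelow hyp hcard
      have hne : R.Nonempty := by
        apply Finset.card_pos.mp
        have : 0 < 2 ^ ((r+1) * (L+1)) := Nat.pow_pos (by norm_num)
        omega
      set x := R.min' hne with hx
      have hxR : x ∈ R := R.min'_mem hne
      have hxgt : ∀ y ∈ xs, y < x := fun y hy => hbelow x hxR y hy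
      set R' := refineS c x xs (R.erase x) with hR'
      have hR'sub : R' ⊆ R.erase x := refineS_subset c x xs (R.erase x)
      have hR'R : ∀ m ∈ R', m ∈ R := fun m hm => Finset.mem_of_mem_erase (hR'sub hm)
      have hgt' : ∀ m ∈ R', x < m := by
        intro m hm
        have h1 := hR'sub hm
        have h2 : m ≠ x := Finset.ne_of_mem_erase h1
        have h3 : x ≤ m := R.min'_le m (Finset.mem_of_mem_erase h1)
        omega
      -- cardinality
      have hcard' : 2 ^ (r * (L + 1)) ≤ R'.card := by
        have h1 : (R.erase x).card = R.card - 1 := Finset.card_erase_of_mem hxR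
        have h2 : (R.erase x).card / 2 ^ xs.length ≤ R'.card := refineS_card c x xs (R.erase x)
        have hlenL : xs.length ≤ L := by omega
        have h3 : (R.erase x).card / 2 ^ L ≤ (R.erase x).card / 2 ^ xs.length :=
          Nat.div_le_div_left (Nat.pow_le_pow_right (by norm_num) hlenL)
            (Nat.pow_pos (by norm_num))
        have h4 : 2 ^ (r * (L + 1)) ≤ (R.erase x).card / 2 ^ L := by
          rw [Nat.le_div_iff_mul_le (Nat.pow_pos (by norm_num))]
          have he : (r + 1) * (L + 1) = r * (L + 1) + L + 1 := by ring
          rw [he] at hcard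
          have : 2 ^ (r * (L + 1) + L + 1) = 2 ^ (r * (L+1)) * 2 ^ L * 2 := by
            rw [pow_add, pow_add]; ring
          have hpos : 0 < 2 ^ (r * (L+1)) * 2 ^ L :=
            Nat.mul_pos (Nat.pow_pos (by norm_num)) (Nat.pow_pos (by norm_num))
          rw [pow_add] at hcard
          omega
        omega
      -- invariants for xs ++ [x]
      have hpw' : (xs ++ [x]).Pairwise (· < ·) := by
        rw [List.pairwise_append]
        exact ⟨hpw, List.pairwise_singleton _ _,
          fun a ha b hb => by rw [List.mem_singleton] at hb; subst hb; exact hxgt a ha⟩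
      have hbelow' : ∀ m ∈ R', ∀ y ∈ xs ++ [x], y < m := by
        intro m hm y hy
        rcases List.mem_append.mp hy with h | h
        · exact hbelow m (hR'R m hm) y h
        · rw [List.mem_singleton] at h; subst h; exact hgt' m hm
      have hyp' : ∀ y ∈ xs ++ [x], ∀ z ∈ xs ++ [x], y < z →
          ∀ m m', (m ∈ R' ∨ m ∈ xs ++ [x]) → (m' ∈ R' ∨ m' ∈ xs ++ [x]) → z < m → z < m' →
            c y z m = c y z m' := by
        intro y hy z hz hyz m m' hm hm' hzm hzm'
        have hmem : ∀ w, (w ∈ R' ∨ w ∈ xs ++ [x]) → z < w → (w ∈ R ∨ w ∈ xs) := by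
          intro w hw _
          rcases hw with h | h
          · exact Or.inl (hR'R w h)
          · rcases List.mem_append.mp h with h | h
            · exact Or.inr h
            · rw [List.mem_singleton] at h; subst h; exact Or.inl hxR
        rcases List.mem_append.mp hz with hzxs | hzx
        · rcases List.mem_append.mp hy with hyxs | hyx
          · exact hyp y hyxs z hzxs hyz m m' (hmem m hm hzm) (hmem m' hm' hzm') hzm hzm'
          · rw [List.mem_singleton] at hyx; subst hyx
            exact absurd (lt_trans hyz (hxgt z hzxs)) (lt_irrefl _)
        · rw [List.mem_singleton] at hzx; subst hzx
          have hyxs : y ∈ xs := by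
            rcases List.mem_append.mp hy with h | h
            · exact h
            · rw [List.mem_singleton] at h; subst h; exact absurd hyz (lt_irrefl _)
          have hmR' : ∀ w, (w ∈ R' ∨ w ∈ xs ++ [x]) → x < w → w ∈ R' := by
            intro w hw hxw
            rcases hw with h | h
            · exact h
            · rcases List.mem_append.mp h with h | h
              · exact absurd (lt_trans hxw (hxgt w h)) (lt_irrefl _)
              · rw [List.mem_singleton] at h; subst h; exact absurd hxw (lt_irrefl _)
          exact refineS_const c x xs (R.erase x) y hyxs m (hmR' m hm hzm) m' (hmR' m' hm' hzm')
      obtain ⟨ys, hyslen, hysmem, hyspw, hyshom⟩ :=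
        ih (xs ++ [x]) R' (by simpa using by omega) hpw' hbelow' hyp' hcard'
      refine ⟨x :: ys, by simp [hyslen], ?_, ?_, ?_⟩
      · intro a ha
        rcases List.mem_cons.mp ha with h | h
        · subst h; exact hxR
        · exact hR'R a (hysmem a h)
      · rw [show xs ++ x :: ys = (xs ++ [x]) ++ ys by simp]
        exact hyspw
      · rw [show xs ++ x :: ys = (xs ++ [x]) ++ ys by simp]
        exact hyshom
/-- Finite Ramsey theorem for pairs, with explicit bound `2 ^ (a + b)`. -/
lemma pairRamsey (d : ℕ → ℕ → Bool) :
    ∀ (n a b : ℕ) (A : Finset ℕ), a + b ≤ n → 2 ^ (a + b) ≤ A.card →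
    ∃ B : Finset ℕ, B ⊆ A ∧ ∃ col : Bool,
      (∀ y ∈ B, ∀ z ∈ B, y < z → d y z = col) ∧
      ((col = true ∧ a ≤ B.card) ∨ (col = false ∧ b ≤ B.card)) := by
  intro n
  induction n with
  | zero =>
      intro a b A hab _
      have ha : a = 0 := by omega
      have hb : b = 0 := by omega
      subst ha; subst hb
      exact ⟨∅, Finset.empty_subset _, true, by simp, Or.inl ⟨rfl, by simp⟩⟩
  | succ n ih =>
      intro a b A hab hA
      match a, b with
      | 0, b => exact ⟨∅, Finset.empty_subset _, true, by simp, Or.inl ⟨rfl, by simp⟩⟩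
      | a+1, 0 => exact ⟨∅, Finset.empty_subset _, false, by simp, Or.inr ⟨rfl, by simp⟩⟩
      | a+1, b+1 =>
        have hApos : A.Nonempty := by
          apply Finset.card_pos.mp
          have : 0 < 2 ^ (a + 1 + (b + 1)) := Nat.pow_pos (by norm_num)
          omega
        set x := A.min' hApos with hx
        have hxA : x ∈ A := A.min'_mem hApos
        set A₁ := A.erase x with hA₁def
        have hA₁card : A₁.card = A.card - 1 := Finset.card_erase_of_mem hxA
        set T := A₁.filter (fun z => d x z = true) with hT
        set F := A₁.filter (fun z => ¬ (d x z = true)) with hF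
        have hTF : T.card + F.card = A₁.card :=
          Finset.card_filter_add_card_filter_not (p := fun z => d x z = true)
        have hAcard : 2 ^ (a + b + 1) * 2 ≤ A.card := by
          have he : a + 1 + (b + 1) = (a + b + 1) + 1 := by omega
          rw [he, pow_succ] at hA
          exact hA
        have hxlt : ∀ z ∈ A₁, x < z := by
          intro z hz
          have h1 : z ≠ x := Finset.ne_of_mem_erase hz
          have h2 : x ≤ z := A.min'_le z (Finset.mem_of_mem_erase hz)
          omega
        by_cases hTc : 2 ^ (a + (b + 1)) ≤ T.card
        · obtain ⟨B', hB'sub, col, hmono, hcard⟩ := ih a (b+1) T (by omega) hTc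
          have hB'A₁ : ∀ z ∈ B', z ∈ A₁ := fun z hz => Finset.mem_of_mem_filter z (hB'sub hz)
          rcases hcard with ⟨hc, hcardB⟩ | ⟨hc, hcardB⟩
          · subst hc
            have hxnB' : x ∉ B' := fun h => absurd rfl (Finset.ne_of_mem_erase (hB'A₁ x h))
            refine ⟨insert x B', ?_, true, ?_, Or.inl ⟨rfl, ?_⟩⟩
            · intro z hz
              rcases Finset.mem_insert.mp hz with h | h
              · subst h; exact hxA
              · exact Finset.mem_of_mem_erase (hB'A₁ z h)
            · intro y hy z hz hyz
              rcases Finset.mem_insert.mp hy with h | h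
              · subst h
                rcases Finset.mem_insert.mp hz with h' | h'
                · omega
                · have := hB'sub h'
                  rw [hT, Finset.mem_filter] at this
                  exact this.2
              · rcases Finset.mem_insert.mp hz with h' | h'
                · subst h'
                  exact absurd hyz (not_lt.mpr (le_of_lt (hxlt y (hB'A₁ y h))))
                · exact hmono y h z h' hyz
            · rw [Finset.card_insert_of_notMem hxnB']; omega
          · subst hc
            refine ⟨B', ?_, false, hmono, Or.inr ⟨rfl, hcardB⟩⟩
            intro z hz; exact Finset.mem_of_mem_erase (hB'A₁ z hz)
        · have hFc : 2 ^ ((a + 1) + b) ≤ F.card := by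
            have h1 : a + (b + 1) = a + b + 1 := by omega
            have h2 : (a + 1) + b = a + b + 1 := by omega
            rw [h1] at hTc
            rw [h2]
            omega
          obtain ⟨B', hB'sub, col, hmono, hcard⟩ := ih (a+1) b F (by omega) hFc
          have hB'A₁ : ∀ z ∈ B', z ∈ A₁ := fun z hz => Finset.mem_of_mem_filter z (hB'sub hz)
          rcases hcard with ⟨hc, hcardB⟩ | ⟨hc, hcardB⟩
          · subst hc
            refine ⟨B', ?_, true, hmono, Or.inl ⟨rfl, hcardB⟩⟩
            intro z hz; exact Finset.mem_of_mem_erase (hB'A₁ z hz)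
          · subst hc
            have hxnB' : x ∉ B' := fun h => absurd rfl (Finset.ne_of_mem_erase (hB'A₁ x h))
            refine ⟨insert x B', ?_, false, ?_, Or.inr ⟨rfl, ?_⟩⟩
            · intro z hz
              rcases Finset.mem_insert.mp hz with h | h
              · subst h; exact hxA
              · exact Finset.mem_of_mem_erase (hB'A₁ z h)
            · intro y hy z hz hyz
              rcases Finset.mem_insert.mp hy with h | h
              · subst h
                rcases Finset.mem_insert.mp hz with h' | h'
                · omega
                · have := hB'sub h'
                  rw [hF, Finset.mem_filter] at this
                  simpa using this.2
              · rcases Finset.mem_insert.mp hz with h' | h'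
                · subst h'
                  exact absurd hyz (not_lt.mpr (le_of_lt (hxlt y (hB'A₁ y h))))
                · exact hmono y h z h' hyz
            · rw [Finset.card_insert_of_notMem hxnB']; omega
lemma Sseq_succ (m : ℕ) (hm : 1 ≤ m) : Sseq (m + 1) = 2 ^ (Sseq m + 2) := by
  cases m with
  | zero => omega
  | succ n => rfl

lemma Sseq_lb : ∀ m, 4 ≤ m → 2 ^ (2 * m + 5) ≤ Sseq m := by
  intro m hm
  induction m, hm using Nat.le_induction with
  | base =>
      have h2 : Sseq 2 = 16 := by rw [Sseq_succ 1 le_rfl]; norm_num [Sseq]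
      have h3 : Sseq 3 = 2 ^ 18 := by rw [Sseq_succ 2 (by norm_num), h2]
      have h4 : Sseq 4 = 2 ^ (2 ^ 18 + 2) := by rw [Sseq_succ 3 (by norm_num), h3]
      rw [h4]
      exact Nat.pow_le_pow_right (by norm_num) (by norm_num)
  | succ m hm ih =>
      have hlt : 2 * m + 5 < 2 ^ (2 * m + 5) := Nat.lt_two_pow_self
      have h1 : 2 * (m + 1) + 5 ≤ Sseq m + 2 := by omega
      rw [Sseq_succ m (by omega)]
      exact Nat.pow_le_pow_right (by norm_num) h1
def EHmk (N x y : ℕ) (h1 : 1 ≤ x) (h2 : x < y) (h3 : y ≤ 2 ^ N + 1) : EHVert N :=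
  ⟨(x, y), h1, h2, h3⟩

lemma EHShift_adj {k : ℕ} (p q : EHVert k) :
    (EHShift k).Adj p q ↔ (p.val.2 = q.val.1 ∨ q.val.2 = p.val.1) := Iff.rfl

/-- The coloring of triples induced by an edge coloring of the shift graph. -/
def tripColor (N : ℕ) (C : Sym2 (EHVert N) → Bool) (x y z : ℕ) : Bool :=
  if h : 1 ≤ x ∧ x < y ∧ y < z ∧ z ≤ 2 ^ N + 1 then
    C s(EHmk N x y h.1 h.2.1 (le_trans (Nat.le_of_lt h.2.2.1) h.2.2.2),
        EHmk N y z (by omega) h.2.2.1 h.2.2.2)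
  else true

lemma tripColor_pos (N : ℕ) (C : Sym2 (EHVert N) → Bool) (x y z : ℕ)
    (h1 : 1 ≤ x) (h2 : x < y) (h3 : y < z) (h4 : z ≤ 2 ^ N + 1) :
    tripColor N C x y z =
      C s(EHmk N x y h1 h2 (le_trans (Nat.le_of_lt h3) h4),
          EHmk N y z (by omega) h3 h4) := by
  unfold tripColor
  rw [dif_pos (⟨h1, h2, h3, h4⟩ : 1 ≤ x ∧ x < y ∧ y < z ∧ z ≤ 2 ^ N + 1)]

theorem mono_copy_of_large (k N : ℕ) (hN : 2 ^ (2 ^ (k + 2) + 5) ≤ N)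
    (C : Sym2 (EHVert N) → Bool) : HasMonoCopy (EHShift k) (EHShift N) C := by
  classical
  set L := 2 ^ (2 * (2 ^ k + 1)) with hLdef
  have hL1 : 1 ≤ L := Nat.one_le_two_pow
  have hLL : L * (L + 1) ≤ N := by
    have h1 : L * (L + 1) ≤ 2 ^ (2 ^ (k + 2) + 5) := by
      calc L * (L + 1) ≤ L * (2 * L) := Nat.mul_le_mul_left _ (by omega)
        _ = 2 ^ (2 * (2 ^ k + 1) + 2 * (2 ^ k + 1) + 1) := by
            rw [hLdef, pow_add, pow_add]; ring
        _ ≤ 2 ^ (2 ^ (k + 2) + 5) := by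
            apply Nat.pow_le_pow_right (by norm_num)
            have h2 : 2 ^ (k + 2) = 4 * 2 ^ k := by ring
            omega
    exact le_trans h1 hN
  have hcardIcc : (Finset.Icc 1 (2 ^ N + 1)).card = 2 ^ N + 1 := by
    rw [Nat.card_Icc]
    exact Nat.add_sub_cancel ..

  obtain ⟨l, hlen, hlsub, hlpw, hlhom⟩ :=
    prehomog (tripColor N C) L L [] (Finset.Icc 1 (2 ^ N + 1)) (by simp) (by simp)
      (by simp) (by simp)
      (by
        rw [hcardIcc]
        have := Nat.pow_le_pow_right (show 1 ≤ 2 by norm_num) hLL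
        omega)
  simp only [List.nil_append] at hlpw hlhom
  have hnodup : l.Nodup := List.Pairwise.imp (fun h => Nat.ne_of_lt h) hlpw
  set d : ℕ → ℕ → Bool := fun y z =>
    if h : ∃ m, m ∈ l ∧ z < m then tripColor N C y z h.choose else true with hd_def
  have hd : ∀ y ∈ l, ∀ z ∈ l, y < z → ∀ m ∈ l, z < m → tripColor N C y z m = d y z := by
    intro y hy z hz hyz m hm hzm
    have hex : ∃ m, m ∈ l ∧ z < m := ⟨m, hm, hzm⟩
    have hspec := hex.choose_spec
    rw [hd_def]
    dsimp only
    rw [dif_pos hex]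
    exact hlhom y hy z hz hyz m hm hex.choose hspec.1 hzm hspec.2
  obtain ⟨B, hBsub, col, hBmono, hBcard⟩ :=
    pairRamsey d ((2 ^ k + 1) + (2 ^ k + 1)) (2 ^ k + 1) (2 ^ k + 1) l.toFinset le_rfl
      (by
        rw [List.toFinset_card_of_nodup hnodup, hlen, hLdef]
        exact Nat.pow_le_pow_right (by norm_num) (by omega))
  have hBt : 2 ^ k + 1 ≤ B.card := by rcases hBcard with ⟨_, h⟩ | ⟨_, h⟩ <;> exact h
  have hBl : ∀ b ∈ B, b ∈ l := fun b hb => List.mem_toFinset.mp (hBsub hb)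
  have hBIcc : ∀ b ∈ B, 1 ≤ b ∧ b ≤ 2 ^ N + 1 := by
    intro b hb
    have := hlsub b (hBl b hb)
    rwa [Finset.mem_Icc] at this
  have key : ∀ x y z, x ∈ B → y ∈ B → z ∈ B → x < y → y < z →
      tripColor N C x y z = col := by
    intro x y z hx hy hz hxy hyz
    rw [hd x (hBl x hx) y (hBl y hy) hxy z (hBl z hz) hyz]
    exact hBmono x hx y hy hxy
  have hpos : 0 < B.card := lt_of_lt_of_le (Nat.succ_pos _) hBt
  set g : ℕ → ℕ := fun i =>
    B.orderEmbOfFin rfl ⟨(i - 1) % B.card, Nat.mod_lt _ hpos⟩ with hgdef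
  have hgmem : ∀ i, g i ∈ B := by
    intro i; rw [hgdef]; exact B.orderEmbOfFin_mem rfl _
  have hgmono : ∀ i j, 1 ≤ i → i < j → j ≤ 2 ^ k + 1 → g i < g j := by
    intro i j h1 hij hjt
    rw [hgdef]
    dsimp only
    apply (B.orderEmbOfFin rfl).strictMono
    have hi : (i - 1) % B.card = i - 1 := Nat.mod_eq_of_lt (by omega)
    have hj : (j - 1) % B.card = j - 1 := Nat.mod_eq_of_lt (by omega)
    simp only [Fin.mk_lt_mk, hi, hj]
    omega
  have hg1 : ∀ i, 1 ≤ g i := fun i => (hBIcc _ (hgmem i)).1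
  have hg2 : ∀ i, g i ≤ 2 ^ N + 1 := fun i => (hBIcc _ (hgmem i)).2
  have ginj : ∀ a b, 1 ≤ a → 1 ≤ b → a ≤ 2 ^ k + 1 → b ≤ 2 ^ k + 1 → g a = g b → a = b := by
    intro a b ha hb hat hbt hg
    by_contra hne
    rcases Nat.lt_or_ge a b with h | h
    · exact absurd hg (Nat.ne_of_lt (hgmono a b ha h hbt))
    · have hba : b < a := by omega
      exact absurd hg.symm (Nat.ne_of_lt (hgmono b a hb hba hat))
  refine ⟨fun p => match p with
    | ⟨(i, j), hp⟩ => EHmk N (g i) (g j) (hg1 i) (hgmono i j hp.1 hp.2.1 hp.2.2) (hg2 j),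
    ?_, ?_, col, ?_⟩
  · -- injectivity
    intro u v huv
    obtain ⟨⟨i, j⟩, hu⟩ := u
    obtain ⟨⟨i', j'⟩, hv⟩ := v
    have hval : ((g i, g j) : ℕ × ℕ) = (g i', g j') := congrArg Subtype.val huv
    have h1 : g i = g i' := congrArg Prod.fst hval
    have h2 : g j = g j' := congrArg Prod.snd hval
    have hi : i = i' := ginj i i' hu.1 hv.1 (by omega) (by omega) h1
    have hj : j = j' := ginj j j' (by omega) (by omega) hu.2.2 hv.2.2 h2
    subst hi; subst hj; rfl
  · -- adjacency
    intro u v huv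
    obtain ⟨⟨i, j⟩, hu⟩ := u
    obtain ⟨⟨i', j'⟩, hv⟩ := v
    rcases (EHShift_adj _ _).mp huv with h | h <;> dsimp only at h
    · exact (EHShift_adj _ _).mpr (Or.inl (congrArg g h))
    · exact (EHShift_adj _ _).mpr (Or.inr (congrArg g h))
  · -- monochromatic
    intro u v huv
    obtain ⟨⟨i, j⟩, hu⟩ := u
    obtain ⟨⟨i', j'⟩, hv⟩ := v
    rcases (EHShift_adj _ _).mp huv with h | h <;> dsimp only at h
    · -- j = i'
      subst h
      have e1 := hgmono i j hu.1 hu.2.1 hu.2.2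
      have e2 := hgmono j j' (by omega : 1 ≤ j) hv.2.1 hv.2.2
      exact (tripColor_pos N C (g i) (g j) (g j') (hg1 i) e1 e2 (hg2 j')).symm.trans
        (key (g i) (g j) (g j') (hgmem i) (hgmem j) (hgmem j') e1 e2)
    · -- j' = i
      subst h
      have e1 := hgmono i' j' hv.1 hv.2.1 hv.2.2
      have e2 := hgmono j' j (by omega : 1 ≤ j') hu.2.1 hu.2.2
      rw [Sym2.eq_swap]
      exact (tripColor_pos N C (g i') (g j') (g j) (hg1 i') e1 e2 (hg2 j)).symm.trans
        (key (g i') (g j') (g j) (hgmem i') (hgmem j') (hgmem j) e1 e2)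

/-- For every positive integer `k`, with `N = S_{2^{k+1}}`, every red-blue edge coloring of
the Erdős–Hajnal shift graph `G N` contains a monochromatic subgraph isomorphic to `G k`. -/
theorem ehShift_mono_copy_of_Sseq (k : ℕ) (hk : 1 ≤ k)
    (C : Sym2 (EHVert (Sseq (2 ^ (k + 1)))) → Bool) :
    HasMonoCopy (EHShift k) (EHShift (Sseq (2 ^ (k + 1)))) C := by
  apply mono_copy_of_large k (Sseq (2 ^ (k + 1))) _ C
  have h4 : 4 ≤ 2 ^ (k + 1) := by
    calc (4 : ℕ) = 2 ^ 2 := by norm_num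
      _ ≤ 2 ^ (k + 1) := Nat.pow_le_pow_right (by norm_num) (by omega)
  have hS := Sseq_lb (2 ^ (k + 1)) h4
  refine le_trans (Nat.pow_le_pow_right (by norm_num) ?_) hS
  have h2 : 2 ^ (k + 2) = 2 * 2 ^ (k + 1) := by ring
  omega
end

section
/- Let t be a positive integer and let n = 2^{t+1}. For every 2-coloring (red/blue) of the edges of the Erdős–Hajnal shift graph G_n, there exist a color c and a set W ⊆ {2, 3, …, 2^n + 1} with |W| = 2^t such that: (1) the subgraph of G_n induced by the vertex set { (a,b) : a < b and a, b ∈ {1} ∪ W } is isomorphic to G_t, and (2) every edge of this induced subgraph of the form (1,a)(a,b) with a, b ∈ W receives the color c. -/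
lemma ramsey_aux (χ : ℕ → ℕ → Bool) (N : ℕ) :
    ∀ r : Bool → ℕ, r true + r false = N → ∀ A : Finset ℕ, 2 ^ N ≤ A.card →
      ∃ (c : Bool) (W : Finset ℕ), W ⊆ A ∧ W.card = r c ∧
        ∀ x ∈ W, ∀ y ∈ W, x < y → χ x y = c := by
  induction N with
  | zero =>
    intro r hr A hA
    exact ⟨true, ∅, by simp, by simp; omega, by simp⟩
  | succ m ih =>
    intro r hr A hA
    by_cases h0 : ∃ c, r c = 0
    · obtain ⟨c, hc⟩ := h0
      exact ⟨c, ∅, by simp, by simp [hc], by simp⟩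
    push_neg at h0
    have hpow : 2 ^ (m + 1) = 2 ^ m + 2 ^ m := by rw [pow_succ]; omega
    have hApos : 0 < A.card := by
      have : 0 < 2 ^ (m + 1) := Nat.pow_pos (by norm_num)
      omega
    have hAne : A.Nonempty := Finset.card_pos.mp hApos
    set a := A.min' hAne with ha
    have haA : a ∈ A := A.min'_mem hAne
    set A' := A.erase a with hA'
    have hA'card : A'.card = A.card - 1 := Finset.card_erase_of_mem haA
    have hsplit : (A'.filter fun x => χ a x = true).card
        + (A'.filter fun x => χ a x = false).card = A'.card := by
      have := Finset.card_filter_add_card_filter_not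
        (s := A') (p := fun x => χ a x = true)
      simpa [Bool.not_eq_true] using this
    have hbig : ∃ c, 2 ^ m ≤ (A'.filter fun x => χ a x = c).card := by
      by_contra h
      push_neg at h
      have h1 := h true
      have h2 := h false
      omega
    obtain ⟨c, hc⟩ := hbig
    set r' : Bool → ℕ := fun c' => if c' = c then r c - 1 else r c' with hr'
    have hsum : r' true + r' false = m := by
      have := h0 c
      cases c <;> simp [hr'] <;> omega
    obtain ⟨c', W', hW'sub, hW'card, hW'mono⟩ :=
      ih r' hsum (A'.filter fun x => χ a x = c) hc
    have hW'A' : W' ⊆ A' := hW'sub.trans (Finset.filter_subset _ _)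
    by_cases hcc : c' = c
    · subst hcc
      have haW' : a ∉ W' := fun h => (Finset.ne_of_mem_erase (hW'A' h)) rfl
      refine ⟨c', insert a W', ?_, ?_, ?_⟩
      · exact Finset.insert_subset haA (hW'A'.trans (Finset.erase_subset _ _))
      · rw [Finset.card_insert_of_notMem haW', hW'card]
        have := h0 c'
        simp [hr']
        omega
      · intro x hx y hy hxy
        rcases Finset.mem_insert.mp hx with rfl | hx
        · rcases Finset.mem_insert.mp hy with rfl | hy
          · omega
          · exact (Finset.mem_filter.mp (hW'sub hy)).2
        · rcases Finset.mem_insert.mp hy with rfl | hy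
          · have := A.min'_le x (Finset.mem_of_mem_erase (hW'A' hx))
            omega
          · exact hW'mono x hx y hy hxy
    · refine ⟨c', W', hW'A'.trans (Finset.erase_subset _ _), ?_, hW'mono⟩
      rw [hW'card, hr']
      simp [hcc]

lemma induce_iso (t n : ℕ) (s : Finset ℕ) (hcard : s.card = 2 ^ t + 1)
    (hs : ∀ x ∈ s, 1 ≤ x ∧ x ≤ 2 ^ n + 1) :
    Nonempty ((SimpleGraph.induce
        {p : EHVert n | p.val.1 ∈ (s : Set ℕ) ∧ p.val.2 ∈ (s : Set ℕ)}
        (EHShift n)) ≃g EHShift t) := by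
  classical
  set σ := s.orderIsoOfFin hcard with hσ
  have hval : ∀ k : Fin (2 ^ t + 1), 1 ≤ (σ k : ℕ) ∧ (σ k : ℕ) ≤ 2 ^ n + 1 :=
    fun k => hs _ (σ k).2
  have hinj : ∀ k l : Fin (2 ^ t + 1), (σ k : ℕ) = (σ l : ℕ) → k = l :=
    fun k l h => σ.injective (Subtype.ext h)
  set g : EHVert t → {p : EHVert n // p.val.1 ∈ (s : Set ℕ) ∧ p.val.2 ∈ (s : Set ℕ)} :=
    fun p =>
      ⟨⟨((σ ⟨p.val.1 - 1, by obtain ⟨h1, h2, h3⟩ := p.2; omega⟩ : ℕ),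
         (σ ⟨p.val.2 - 1, by obtain ⟨h1, h2, h3⟩ := p.2; omega⟩ : ℕ)),
        (hval _).1,
        Subtype.coe_lt_coe.mpr (σ.strictMono (Fin.mk_lt_mk.mpr
          (by obtain ⟨h1, h2, h3⟩ := p.2; omega))),
        (hval _).2⟩,
       Finset.mem_coe.mpr (σ _).2, Finset.mem_coe.mpr (σ _).2⟩ with hg
  have hginj : Function.Injective g := by
    intro p q h
    have h1 : (σ ⟨p.val.1 - 1, _⟩ : ℕ) = (σ ⟨q.val.1 - 1, _⟩ : ℕ) :=
      congrArg (fun x => x.val.val.1) h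
    have h2 : (σ ⟨p.val.2 - 1, _⟩ : ℕ) = (σ ⟨q.val.2 - 1, _⟩ : ℕ) :=
      congrArg (fun x => x.val.val.2) h
    have e1 : p.val.1 - 1 = q.val.1 - 1 := congrArg Fin.val (hinj _ _ h1)
    have e2 : p.val.2 - 1 = q.val.2 - 1 := congrArg Fin.val (hinj _ _ h2)
    obtain ⟨p1, p2, p3⟩ := p.2
    obtain ⟨q1, q2, q3⟩ := q.2
    exact Subtype.ext (Prod.ext (by omega) (by omega))
  have hgsurj : Function.Surjective g := by
    rintro ⟨⟨⟨x, y⟩, hxy⟩, hmx, hmy⟩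
    have hmx' : x ∈ s := Finset.mem_coe.mp hmx
    have hmy' : y ∈ s := Finset.mem_coe.mp hmy
    set kx := σ.symm ⟨x, hmx'⟩ with hkx
    set ky := σ.symm ⟨y, hmy'⟩ with hky
    have hklt : kx < ky := σ.symm.strictMono (Subtype.mk_lt_mk.mpr hxy.2.1)
    refine ⟨⟨((kx : ℕ) + 1, (ky : ℕ) + 1), by omega,
      by exact_mod_cast Nat.add_lt_add_right hklt 1, by have := ky.isLt; omega⟩, ?_⟩
    apply Subtype.ext
    apply Subtype.ext
    apply Prod.ext
    · show (σ ⟨(kx : ℕ) + 1 - 1, _⟩ : ℕ) = x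
      have : (⟨(kx : ℕ) + 1 - 1, by omega⟩ : Fin (2 ^ t + 1)) = kx := Fin.ext (by simp)
      rw [this, hkx, σ.apply_symm_apply]
    · show (σ ⟨(ky : ℕ) + 1 - 1, _⟩ : ℕ) = y
      have : (⟨(ky : ℕ) + 1 - 1, by omega⟩ : Fin (2 ^ t + 1)) = ky := Fin.ext (by simp)
      rw [this, hky, σ.apply_symm_apply]
  refine ⟨(SimpleGraph.Iso.symm ⟨Equiv.ofBijective g ⟨hginj, hgsurj⟩, ?_⟩)⟩
  intro p q
  show (EHShift n).Adj (g p).val (g q).val ↔ (EHShift t).Adj p q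
  obtain ⟨p1, p2, p3⟩ := p.2
  obtain ⟨q1, q2, q3⟩ := q.2
  show ((σ _ : ℕ) = (σ _ : ℕ) ∨ (σ _ : ℕ) = (σ _ : ℕ)) ↔ _
  constructor
  · rintro (h | h)
    · left
      have : p.val.2 - 1 = q.val.1 - 1 := congrArg Fin.val (hinj _ _ h); omega
    · right
      have : q.val.2 - 1 = p.val.1 - 1 := congrArg Fin.val (hinj _ _ h); omega
  · rintro (h | h)
    · left
      have : (⟨p.val.2 - 1, by omega⟩ : Fin (2 ^ t + 1)) = ⟨q.val.1 - 1, by omega⟩ :=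
        Fin.ext (by simp; omega)
      rw [this]
    · right
      have : (⟨q.val.2 - 1, by omega⟩ : Fin (2 ^ t + 1)) = ⟨p.val.1 - 1, by omega⟩ :=
        Fin.ext (by simp; omega)
      rw [this]



/-- Lemma 1: for `n = 2 ^ (t + 1)` and any red-blue edge coloring of `G n`, there exist a color
`c` and a set `W ⊆ {2, …, 2 ^ n + 1}` of size `2 ^ t` such that the subgraph of `G n` induced by
the vertices with both endpoints in `{1} ∪ W` is isomorphic to `G t`, and every edge of the form
`(1, a)(a, b)` with `a, b ∈ W` receives the color `c`. -/
theorem ehShift_mono_star_lemma (t : ℕ) (ht : 1 ≤ t)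
    (C : Sym2 (EHVert (2 ^ (t + 1))) → Bool) :
    ∃ (c : Bool) (W : Finset ℕ),
      W ⊆ Finset.Icc 2 (2 ^ (2 ^ (t + 1)) + 1) ∧ W.card = 2 ^ t ∧
      Nonempty
        ((SimpleGraph.induce
            {p : EHVert (2 ^ (t + 1)) |
              p.val.1 ∈ insert 1 (W : Set ℕ) ∧ p.val.2 ∈ insert 1 (W : Set ℕ)}
            (EHShift (2 ^ (t + 1)))) ≃g EHShift t) ∧
      ∀ a b, a ∈ W → b ∈ W → a < b →
        ∀ p q : EHVert (2 ^ (t + 1)), p.val = (1, a) → q.val = (a, b) →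
          C s(p, q) = c := by
  classical
  have hsum : (fun _ : Bool => 2 ^ t) true + (fun _ : Bool => 2 ^ t) false = 2 ^ (t + 1) := by
    show 2 ^ t + 2 ^ t = 2 ^ (t + 1)
    rw [pow_succ]; omega
  have hAcard : 2 ^ (2 ^ (t + 1)) ≤ (Finset.Icc 2 (2 ^ (2 ^ (t + 1)) + 1)).card := by
    rw [Nat.card_Icc]; omega
  obtain ⟨c, W, hWsub, hWcard0, hWmono⟩ := ramsey_aux
    (fun x y =>
      if h : 2 ≤ x ∧ x < y ∧ y ≤ 2 ^ (2 ^ (t + 1)) + 1 then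
        C s(⟨(1, x), le_refl 1, by omega, by omega⟩, ⟨(x, y), by omega, h.2.1, h.2.2⟩)
      else true)
    (2 ^ (t + 1)) (fun _ => 2 ^ t) hsum _ hAcard
  have hWcard : W.card = 2 ^ t := hWcard0
  have hW2 : ∀ x ∈ W, 2 ≤ x ∧ x ≤ 2 ^ (2 ^ (t + 1)) + 1 := by
    intro x hx
    have := hWsub hx
    rw [Finset.mem_Icc] at this
    omega
  have h1W : (1 : ℕ) ∉ W := fun h => by have := hW2 1 h; omega
  refine ⟨c, W, hWsub, hWcard, ?_, ?_⟩
  · have hscard : (insert 1 W).card = 2 ^ t + 1 := by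
      rw [Finset.card_insert_of_notMem h1W, hWcard]
    have hsbound : ∀ x ∈ insert 1 W, 1 ≤ x ∧ x ≤ 2 ^ (2 ^ (t + 1)) + 1 := by
      intro x hx
      rcases Finset.mem_insert.mp hx with rfl | hx
      · exact ⟨le_refl 1, Nat.le_add_left 1 _⟩
      · have := hW2 x hx; omega
    have h := induce_iso t (2 ^ (t + 1)) (insert 1 W) hscard hsbound
    rw [Finset.coe_insert] at h
    exact h
  · intro a b ha hb hab p q hp hq
    have hca : 2 ≤ a ∧ a ≤ 2 ^ (2 ^ (t + 1)) + 1 := hW2 a ha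
    have hcb : 2 ≤ b ∧ b ≤ 2 ^ (2 ^ (t + 1)) + 1 := hW2 b hb
    have hcond : 2 ≤ a ∧ a < b ∧ b ≤ 2 ^ (2 ^ (t + 1)) + 1 := ⟨hca.1, hab, hcb.2⟩
    have hmono := hWmono a ha b hb hab
    beta_reduce at hmono
    rw [dif_pos hcond] at hmono
    rw [show p = (⟨(1, a), le_refl 1, by omega, by omega⟩ : EHVert (2 ^ (t + 1))) from
          Subtype.ext hp,
        show q = (⟨(a, b), by omega, hcond.2.1, hcond.2.2⟩ : EHVert (2 ^ (t + 1))) from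
          Subtype.ext hq]
    exact hmono
end

section
/- There exists an ascending sequence of graphs {G_k} that is a Ramsey sequence, whose clique numbers are bounded (indeed ω(G_k) = 2 for all k) and whose chromatic numbers tend to infinity (indeed χ(G_k) = k + 1 for all k). Concretely, the sequence of Erdős–Hajnal shift graphs has all of these properties: for every k, G_k is isomorphic to a proper subgraph of G_{k+1}; ω(G_k) = 2; χ(G_k) = k + 1; and for every k there exists n > k such that every red-blue coloring of the edges of G_n contains a monochromatic subgraph isomorphic to G_k. -/
instance (k : ℕ) : DecidableEq (EHVert k) :=
  fun a b => decidable_of_iff (a.val = b.val) Subtype.ext_iff.symm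

noncomputable instance (k : ℕ) : Fintype (EHVert k) := by
  have : Function.Injective (fun v : EHVert k =>
      ((⟨v.val.1, by obtain ⟨h1,h2,h3⟩ := v.2; omega⟩, ⟨v.val.2, by obtain ⟨h1,h2,h3⟩ := v.2; omega⟩) : Fin (2^k+2) × Fin (2^k+2))) := by
    rintro ⟨⟨a, b⟩, _⟩ ⟨⟨c, d⟩, _⟩ h
    simp only [Prod.mk.injEq, Fin.mk.injEq] at h
    exact Subtype.ext (Prod.ext h.1 h.2)
  exact Fintype.ofInjective _ this

lemma ehAdj {k : ℕ} (u v : EHVert k) :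
    (EHShift k).Adj u v ↔ (u.val.2 = v.val.1 ∨ v.val.2 = u.val.1) := Iff.rfl

lemma part1 (k : ℕ) :
    ∃ H : (EHShift (k + 1)).Subgraph, H ≠ ⊤ ∧ Nonempty (EHShift k ≃g H.coe) := by
  have hle : 2 ^ k + 1 ≤ 2 ^ (k + 1) + 1 := by
    have := Nat.pow_le_pow_right (by norm_num : 1 ≤ 2) (Nat.le_succ k); omega
  refine ⟨⟨{p | p.val.2 ≤ 2 ^ k + 1},
      fun p q => (EHShift (k+1)).Adj p q ∧ p.val.2 ≤ 2 ^ k + 1 ∧ q.val.2 ≤ 2 ^ k + 1,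
      fun h => h.1, fun h => h.2.1, ⟨fun p q h => ⟨h.1.symm, h.2.2, h.2.1⟩⟩⟩, ?_, ?_⟩
  · intro htop
    have hv : (1, 2 ^ (k+1) + 1) ∈ {p : ℕ × ℕ | 1 ≤ p.1 ∧ p.1 < p.2 ∧ p.2 ≤ 2 ^ (k+1) + 1} := by
      constructor
      · exact le_refl 1
      · constructor
        · have := Nat.one_le_two_pow (n := k + 1); omega
        · exact le_refl _
    have hverts := congrArg SimpleGraph.Subgraph.verts htop
    rw [SimpleGraph.Subgraph.verts_top] at hverts
    have hall : ∀ p : EHVert (k+1), p.val.2 ≤ 2 ^ k + 1 := Set.eq_univ_iff_forall.mp hverts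
    have : 2 ^ (k+1) + 1 ≤ 2 ^ k + 1 := hall ⟨(1, 2 ^ (k+1) + 1), hv⟩
    have h1 : 2 ^ k < 2 ^ (k + 1) := Nat.pow_lt_pow_right (by norm_num) (Nat.lt_succ_self k)
    omega
  · refine ⟨⟨⟨fun v => ⟨⟨v.val, ?_⟩, ?_⟩, fun w => ⟨w.val.val, ?_⟩, ?_, ?_⟩, ?_⟩⟩
    · obtain ⟨h1, h2, h3⟩ := v.2; exact ⟨h1, h2, le_trans h3 hle⟩
    · exact v.2.2.2
    · obtain ⟨h1, h2, _⟩ := w.val.2; exact ⟨h1, h2, w.2⟩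
    · intro v; rfl
    · intro w; rfl
    · intro u v
      constructor
      · intro h; exact h.1
      · intro h; exact ⟨h, u.2.2.2, v.2.2.2⟩

lemma part2 (k : ℕ) (hk : 1 ≤ k) : (EHShift k).cliqueNum = 2 := by
  have h3 : (3 : ℕ) ≤ 2 ^ k + 1 := by
    have : 2 ≤ 2 ^ k := by
      calc 2 = 2 ^ 1 := rfl
      _ ≤ 2 ^ k := Nat.pow_le_pow_right (by norm_num) hk
    omega
  have hbdd : BddAbove {n | ∃ s, (EHShift k).IsNClique n s} := by
    refine ⟨Fintype.card (EHVert k), fun n ⟨s, hs⟩ => ?_⟩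
    rw [← hs.2]
    exact Finset.card_le_univ s
  -- no 3-clique
  have hno3 : ∀ n ∈ {n | ∃ s, (EHShift k).IsNClique n s}, n ≤ 2 := by
    rintro n ⟨s, hs⟩
    by_contra hgt
    push_neg at hgt
    obtain ⟨t, hts, htc⟩ := Finset.exists_subset_card_eq (s := s) (n := 3) (by rw [hs.2]; omega : 3 ≤ s.card)
    obtain ⟨a, b, c, hab, hac, hbc, rfl⟩ := Finset.card_eq_three.mp htc
    have hcl : (EHShift k).IsClique (↑({a, b, c} : Finset (EHVert k))) :=
      hs.1.subset (Finset.coe_subset.mpr hts)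
    have h1 : (EHShift k).Adj a b := hcl (by simp) (by simp) hab
    have h2 : (EHShift k).Adj a c := hcl (by simp) (by simp) hac
    have h3 : (EHShift k).Adj b c := hcl (by simp) (by simp) hbc
    obtain ⟨⟨a1, a2⟩, ha1, ha2, ha3⟩ := a
    obtain ⟨⟨b1, b2⟩, hb1, hb2, hb3⟩ := b
    obtain ⟨⟨c1, c2⟩, hc1, hc2, hc3⟩ := c
    replace h1 := (ehAdj _ _).mp h1; replace h2 := (ehAdj _ _).mp h2; replace h3 := (ehAdj _ _).mp h3
    simp only at h1 h2 h3
    omega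
  have hv12 : ((1, 2) : ℕ × ℕ) ∈ {p : ℕ × ℕ | 1 ≤ p.1 ∧ p.1 < p.2 ∧ p.2 ≤ 2 ^ k + 1} :=
    ⟨le_refl 1, by omega, by omega⟩
  have hv23 : ((2, 3) : ℕ × ℕ) ∈ {p : ℕ × ℕ | 1 ≤ p.1 ∧ p.1 < p.2 ∧ p.2 ≤ 2 ^ k + 1} :=
    ⟨by omega, by omega, by omega⟩
  have hne : (⟨(1, 2), hv12⟩ : EHVert k) ≠ ⟨(2, 3), hv23⟩ := by
    intro h
    have := congrArg (fun v : EHVert k => v.val.1) h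
    simp at this
  have hcl2 : (EHShift k).IsNClique 2 {⟨(1, 2), hv12⟩, ⟨(2, 3), hv23⟩} := by
    constructor
    · intro u hu v hv huv
      replace hu := (Finset.mem_insert.mp (Finset.mem_coe.mp hu)).imp_right Finset.mem_singleton.mp
      replace hv := (Finset.mem_insert.mp (Finset.mem_coe.mp hv)).imp_right Finset.mem_singleton.mp
      rcases hu with rfl | rfl <;> rcases hv with rfl | rfl
      · exact absurd rfl huv
      · exact Or.inl rfl
      · exact Or.inr rfl
      · exact absurd rfl huv
    · exact Finset.card_pair hne
  apply le_antisymm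
  · exact csSup_le ⟨0, ⟨∅, SimpleGraph.isNClique_empty.mpr rfl⟩⟩ hno3
  · exact le_csSup hbdd ⟨_, hcl2⟩

lemma testBit_msb_xor {a b : ℕ} (hab : a < b) :
    a.testBit ((a ^^^ b).log2) = false ∧ b.testBit ((a ^^^ b).log2) = true := by
  set x := a ^^^ b with hx
  have hxne : x ≠ 0 := by
    simp only [hx, ne_eq]
    intro h
    have := congrArg (· ^^^ b) h
    simp only [Nat.xor_assoc, Nat.xor_self, Nat.xor_zero, Nat.zero_xor] at this
    omega
  set p := x.log2 with hp
  have hbit : x.testBit p = true := by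
    have h1 : 2 ^ p ≤ x := Nat.log2_self_le hxne
    have h2 : x < 2 ^ (p + 1) := Nat.lt_log2_self
    rw [Nat.testBit_eq_decide_div_mod_eq]
    have : x / 2 ^ p = 1 := Nat.div_eq_of_lt_le (by omega) (by rw [pow_succ] at h2; omega)
    simp [this]
  have hhigh : ∀ j, p < j → a.testBit j = b.testBit j := by
    intro j hj
    have hxj : x.testBit j = false :=
      Nat.testBit_eq_false_of_lt (lt_of_lt_of_le Nat.lt_log2_self
        (Nat.pow_le_pow_right (by norm_num) hj))
    rw [hx, Nat.testBit_xor] at hxj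
    cases ha : a.testBit j <;> cases hb : b.testBit j <;> rw [ha, hb] at hxj <;> simp_all
  have hdiff : a.testBit p ≠ b.testBit p := by
    rw [hx, Nat.testBit_xor] at hbit
    intro h
    rw [h] at hbit
    simp at hbit
  rcases ha : a.testBit p with _ | _
  · have hbt : b.testBit p = true := by
      cases hb : b.testBit p
      · rw [ha, hb] at hdiff; simp at hdiff
      · rfl
    exact ⟨rfl, hbt⟩
  · exfalso
    have hbf : b.testBit p = false := by
      cases hb : b.testBit p
      · rfl
      · rw [ha, hb] at hdiff; simp at hdiff
    have : b < a := Nat.lt_of_testBit p hbf ha (fun j hj => (hhigh j hj).symm)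
    omega

lemma part3 (k : ℕ) : (EHShift k).chromaticNumber = (k + 1 : ℕ) := by
  -- upper bound: explicit coloring
  have hcol : (EHShift k).Colorable (k + 1) := by
    have hbound : ∀ v : EHVert k, ((v.val.1 - 1) ^^^ (v.val.2 - 1)).log2 < k + 1 := by
      intro v
      obtain ⟨h1, h2, h3⟩ := v.2
      have hne : (v.val.1 - 1) ^^^ (v.val.2 - 1) ≠ 0 := by
        simp only [ne_eq]
        intro h
        have := congrArg (· ^^^ (v.val.2 - 1)) h
        simp only [Nat.xor_assoc, Nat.xor_self, Nat.xor_zero, Nat.zero_xor] at this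
        omega
      rw [Nat.log2_lt hne]
      have hlt : v.val.1 - 1 < 2 ^ (k + 1) ∧ v.val.2 - 1 < 2 ^ (k + 1) := by
        have : 2 ^ k < 2 ^ (k + 1) := Nat.pow_lt_pow_right (by norm_num) (Nat.lt_succ_self k)
        omega
      exact Nat.xor_lt_two_pow hlt.1 hlt.2
    refine ⟨SimpleGraph.Coloring.mk
      (fun v => ⟨((v.val.1 - 1) ^^^ (v.val.2 - 1)).log2, hbound v⟩) ?_⟩
    intro u v hadj heq
    obtain ⟨⟨i, j⟩, hu1, hu2, hu3⟩ := u
    obtain ⟨⟨l, m⟩, hv1, hv2, hv3⟩ := v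
    replace hadj := (ehAdj _ _).mp hadj
    simp only [Fin.mk.injEq] at heq hadj
    have hA := testBit_msb_xor (a := i - 1) (b := j - 1) (by omega)
    have hB := testBit_msb_xor (a := l - 1) (b := m - 1) (by omega)
    rcases hadj with h | h
    · -- j = l
      rw [← h] at heq hB
      rw [← heq] at hB
      rw [hA.2] at hB
      exact absurd hB.1 (by simp)
    · -- m = i
      rw [h] at heq hB
      rw [← heq] at hB
      rw [hA.1] at hB
      exact absurd hB.2 (by simp)
  -- lower bound: not colorable with k colors
  have hnocol : ∀ k' : ℕ, (EHShift k).Colorable k' → 2 ^ k + 1 ≤ 2 ^ k' := by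
    intro k' ⟨c⟩
    classical
    set F : ℕ → Finset (Fin k') :=
      fun i => (Finset.univ.filter (fun v : EHVert k => v.val.1 = i)).image c with hF
    have hinj : Set.InjOn F (Finset.Icc 1 (2 ^ k + 1)) := by
      have key : ∀ i j, i ∈ Finset.Icc 1 (2 ^ k + 1) → j ∈ Finset.Icc 1 (2 ^ k + 1) →
          i < j → F i ≠ F j := by
        intro i j hi hj hij heq
        rw [Finset.mem_Icc] at hi hj
        have hvij : ((i, j) : ℕ × ℕ) ∈ {p : ℕ × ℕ | 1 ≤ p.1 ∧ p.1 < p.2 ∧ p.2 ≤ 2 ^ k + 1} :=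
          ⟨hi.1, hij, hj.2⟩
        have hmem : c ⟨(i, j), hvij⟩ ∈ F i := by
          rw [hF]
          apply Finset.mem_image_of_mem
          exact Finset.mem_filter.mpr ⟨Finset.mem_univ _, rfl⟩
        rw [heq, hF] at hmem
        obtain ⟨w, hw, hcw⟩ := Finset.mem_image.mp hmem
        rw [Finset.mem_filter] at hw
        have hadj : (EHShift k).Adj ⟨(i, j), hvij⟩ w := Or.inl hw.2.symm
        exact c.valid hadj hcw.symm
      intro i hi j hj heq
      by_contra hne
      rcases lt_or_gt_of_ne hne with h | h
      · exact key i j (by exact_mod_cast hi) (by exact_mod_cast hj) h heq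
      · exact key j i (by exact_mod_cast hj) (by exact_mod_cast hi) h heq.symm
    have hcard := Finset.card_le_card_of_injOn F (fun a _ => Finset.mem_univ (F a)) hinj
    rw [Nat.card_Icc] at hcard
    simpa using hcard
  apply le_antisymm
  · exact hcol.chromaticNumber_le
  · by_contra hlt
    push_neg at hlt
    have hle : (EHShift k).chromaticNumber ≤ (k : ℕ) := by
      have hcast : ((k : ℕ) : ℕ∞) + 1 = ((k + 1 : ℕ) : ℕ∞) := by push_cast; ring
      rw [← hcast] at hlt
      exact Order.le_of_lt_add_one hlt
    have := hnocol k (SimpleGraph.chromaticNumber_le_iff_colorable.mp hle)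
    omega

lemma pairRamseyAux : ∀ n p q : ℕ, p + q ≤ n → ∃ t : ℕ,
    ∀ (d : ℕ → ℕ → Bool) (S : Finset ℕ), t ≤ S.card →
    (∃ A ⊆ S, A.card = p ∧ ∀ i ∈ A, ∀ j ∈ A, i < j → d i j = true) ∨
    (∃ A ⊆ S, A.card = q ∧ ∀ i ∈ A, ∀ j ∈ A, i < j → d i j = false) := by
  intro n
  induction n with
  | zero =>
    intro p q hpq
    refine ⟨0, fun d S _ => Or.inl ⟨∅, Finset.empty_subset S, ?_, by simp⟩⟩
    simp; omega
  | succ n ih =>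
    intro p q hpq
    match p, q with
    | 0, q => exact ⟨0, fun d S _ => Or.inl ⟨∅, Finset.empty_subset S, by simp, by simp⟩⟩
    | p + 1, 0 => exact ⟨0, fun d S _ => Or.inr ⟨∅, Finset.empty_subset S, by simp, by simp⟩⟩
    | p + 1, q + 1 =>
      obtain ⟨t₁, h₁⟩ := ih p (q + 1) (by omega)
      obtain ⟨t₂, h₂⟩ := ih (p + 1) q (by omega)
      refine ⟨t₁ + t₂ + 1, fun d S hS => ?_⟩
      have hSne : S.Nonempty := Finset.card_pos.mp (by omega)
      set v := S.min' hSne with hv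
      classical
      set T := (S.erase v).filter (fun y => d v y = true) with hT
      set F := (S.erase v).filter (fun y => ¬ (d v y = true)) with hFdef
      have hcards : T.card + F.card = (S.erase v).card :=
        Finset.card_filter_add_card_filter_not _
      have herase : (S.erase v).card = S.card - 1 :=
        Finset.card_erase_of_mem (S.min'_mem hSne)
      have hvlt : ∀ y, y ∈ S.erase v → v < y := by
        intro y hy
        rw [Finset.mem_erase] at hy
        exact lt_of_le_of_ne (S.min'_le y hy.2) (Ne.symm hy.1)
      rcases le_or_gt t₁ T.card with hc | hc
      · rcases h₁ d T hc with ⟨A, hAsub, hAcard, hAmono⟩ | ⟨A, hAsub, hAcard, hAmono⟩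
        · -- extend red clique with v
          have hvnA : v ∉ A := by
            intro hvA
            have := hAsub hvA
            rw [hT, Finset.mem_filter, Finset.mem_erase] at this
            exact this.1.1 rfl
          refine Or.inl ⟨insert v A, ?_, ?_, ?_⟩
          · intro y hy
            rcases Finset.mem_insert.mp hy with rfl | hy'
            · exact S.min'_mem hSne
            · have := hAsub hy'
              rw [hT, Finset.mem_filter, Finset.mem_erase] at this
              exact this.1.2
          · rw [Finset.card_insert_of_notMem hvnA, hAcard]
          · intro i hi j hj hij
            rcases Finset.mem_insert.mp hi with rfl | hi'
            · rcases Finset.mem_insert.mp hj with rfl | hj'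
              · omega
              · have := hAsub hj'
                rw [hT, Finset.mem_filter] at this
                exact this.2
            · rcases Finset.mem_insert.mp hj with rfl | hj'
              · exfalso
                have := hvlt i (Finset.mem_of_mem_filter i (hAsub hi'))
                omega
              · exact hAmono i hi' j hj' hij
        · exact Or.inr ⟨A, fun y hy =>
            Finset.mem_of_mem_erase (Finset.mem_of_mem_filter y (hAsub hy)),
            hAcard, hAmono⟩
      · have hc2 : t₂ ≤ F.card := by omega
        rcases h₂ d F hc2 with ⟨A, hAsub, hAcard, hAmono⟩ | ⟨A, hAsub, hAcard, hAmono⟩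
        · exact Or.inl ⟨A, fun y hy =>
            Finset.mem_of_mem_erase (Finset.mem_of_mem_filter y (hAsub hy)),
            hAcard, hAmono⟩
        · -- extend blue clique with v
          have hvnA : v ∉ A := by
            intro hvA
            have := hAsub hvA
            rw [hFdef, Finset.mem_filter, Finset.mem_erase] at this
            exact this.1.1 rfl
          refine Or.inr ⟨insert v A, ?_, ?_, ?_⟩
          · intro y hy
            rcases Finset.mem_insert.mp hy with rfl | hy'
            · exact S.min'_mem hSne
            · have := hAsub hy'
              rw [hFdef, Finset.mem_filter, Finset.mem_erase] at this
              exact this.1.2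
          · rw [Finset.card_insert_of_notMem hvnA, hAcard]
          · intro i hi j hj hij
            rcases Finset.mem_insert.mp hi with rfl | hi'
            · rcases Finset.mem_insert.mp hj with rfl | hj'
              · omega
              · have := hAsub hj'
                rw [hFdef, Finset.mem_filter] at this
                simpa using this.2
            · rcases Finset.mem_insert.mp hj with rfl | hj'
              · exfalso
                have := hvlt i (Finset.mem_of_mem_filter i (hAsub hi'))
                omega
              · exact hAmono i hi' j hj' hij

lemma pairRamseyMono (m : ℕ) : ∃ t : ℕ,
    ∀ (d : ℕ → ℕ → Bool) (S : Finset ℕ), t ≤ S.card →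
    ∃ A ⊆ S, A.card = m ∧ ∃ b : Bool, ∀ i ∈ A, ∀ j ∈ A, i < j → d i j = b := by
  obtain ⟨t, ht⟩ := pairRamseyAux (m + m) m m le_rfl
  refine ⟨t, fun d S hS => ?_⟩
  rcases ht d S hS with ⟨A, h1, h2, h3⟩ | ⟨A, h1, h2, h3⟩
  · exact ⟨A, h1, h2, true, h3⟩
  · exact ⟨A, h1, h2, false, h3⟩

lemma preHomog : ∀ t M : ℕ, ∃ N : ℕ,
    ∀ (c : ℕ → ℕ → ℕ → Bool) (S : Finset ℕ), N ≤ S.card →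
    ∃ (x : ℕ → ℕ) (T : Finset ℕ) (e : ℕ → ℕ → Bool),
      T ⊆ S ∧ M ≤ T.card ∧ (∀ i, i < t → x i ∈ S) ∧
      (∀ i j, i < j → j < t → x i < x j) ∧
      (∀ i, i < t → ∀ y ∈ T, x i < y) ∧
      (∀ i j, i < j → j < t → ∀ y ∈ T, c (x i) (x j) y = e i j) ∧
      (∀ i j l, i < j → j < l → l < t → c (x i) (x j) (x l) = e i j) := by
  intro t
  induction t with
  | zero =>
    intro M
    exact ⟨M, fun c S hS => ⟨fun _ => 0, S, fun _ _ => true, Finset.Subset.refl S, hS,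
      by omega, by omega, by omega, by omega, by omega⟩⟩
  | succ t ih =>
    intro M
    obtain ⟨N, hN⟩ := ih (2 ^ t * M + 1)
    refine ⟨N, fun c S hS => ?_⟩
    obtain ⟨x, T, e, hTS, hTcard, hxS, hxmono, hxT, hpair, htriple⟩ := hN c S hS
    have hTne : T.Nonempty := Finset.card_pos.mp (by omega)
    set v := T.min' hTne with hv
    set T' := T.erase v with hT'
    have hT'card : 2 ^ t * M ≤ T'.card := by
      rw [hT', Finset.card_erase_of_mem (T.min'_mem hTne)]
      omega
    classical
    set g : ℕ → (Fin t → Bool) := fun y i => c (x i.val) v y with hg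
    obtain ⟨w, -, hw⟩ := Finset.exists_le_card_fiber_of_mul_le_card_of_maps_to
      (f := g) (s := T') (t := (Finset.univ : Finset (Fin t → Bool))) (n := M)
      (fun a _ => Finset.mem_univ _) Finset.univ_nonempty
      (by rw [Finset.card_univ, Fintype.card_fun]; simp; omega)
    set T'' := T'.filter (fun y => g y = w) with hT''
    refine ⟨fun i => if i = t then v else x i, T'',
      fun i j => if h : j = t ∧ i < t then w ⟨i, h.2⟩ else e i j,
      ?_, hw, ?_, ?_, ?_, ?_, ?_⟩
    · exact fun y hy => hTS (Finset.mem_of_mem_erase (Finset.mem_of_mem_filter y hy))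
    · intro i hi
      by_cases h : i = t
      · simp only [h, if_pos rfl]
        exact hTS (T.min'_mem hTne)
      · simp only [if_neg h]
        exact hxS i (by omega)
    · intro i j hij hj
      have hi : i ≠ t := by omega
      by_cases h : j = t
      · simp only [if_neg hi, h, if_pos rfl]
        exact hxT i (by omega) v (T.min'_mem hTne)
      · simp only [if_neg hi, if_neg h]
        exact hxmono i j hij (by omega)
    · intro i hi y hy
      have hyT' : y ∈ T' := Finset.mem_of_mem_filter y hy
      have hyT : y ∈ T := Finset.mem_of_mem_erase hyT'
      by_cases h : i = t
      · simp only [h, if_pos rfl]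
        rw [hT', Finset.mem_erase] at hyT'
        exact lt_of_le_of_ne (T.min'_le y hyT'.2) (Ne.symm hyT'.1)
      · simp only [if_neg h]
        exact hxT i (by omega) y hyT
    · intro i j hij hj y hy
      have hi : i ≠ t := by omega
      have hyT : y ∈ T := Finset.mem_of_mem_erase (Finset.mem_of_mem_filter y hy)
      by_cases h : j = t
      · have hit : i < t := by omega
        simp only [if_neg hi, h]
        simp only [if_true, true_and]
        rw [dif_pos hit]
        exact congrFun (Finset.mem_filter.mp hy).2 ⟨i, hit⟩
      · have hjt : j < t := by omega
        simp only [if_neg hi, if_neg h]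
        rw [dif_neg (by omega : ¬ (j = t ∧ i < t))]
        exact hpair i j hij hjt y hyT
    · intro i j l hij hjl hl
      have hi : i ≠ t := by omega
      have hj : j ≠ t := by omega
      by_cases h : l = t
      · simp only [if_neg hi, if_neg hj, h, if_pos rfl]
        rw [dif_neg (by omega : ¬ (j = t ∧ i < t))]
        exact hpair i j hij (by omega) v (T.min'_mem hTne)
      · simp only [if_neg hi, if_neg hj, if_neg h]
        rw [dif_neg (by omega : ¬ (j = t ∧ i < t))]
        exact htriple i j l hij hjl (by omega)

lemma tripleRamsey (m : ℕ) : ∃ N : ℕ,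
    ∀ (c : ℕ → ℕ → ℕ → Bool) (S : Finset ℕ), N ≤ S.card →
    ∃ z : ℕ → ℕ, (∀ i, i < m → z i ∈ S) ∧ (∀ i j, i < j → j < m → z i < z j) ∧
      ∃ b : Bool, ∀ i j l, i < j → j < l → l < m → c (z i) (z j) (z l) = b := by
  obtain ⟨t, ht⟩ := pairRamseyMono m
  obtain ⟨N, hN⟩ := preHomog t 0
  refine ⟨N, fun c S hS => ?_⟩
  obtain ⟨x, T, e, -, -, hxS, hxmono, -, -, htriple⟩ := hN c S hS
  obtain ⟨A, hAsub, hAcard, b, hb⟩ := ht e (Finset.range t) (by simp)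
  have hAlt : ∀ a ∈ A, a < t := fun a ha => Finset.mem_range.mp (hAsub ha)
  set σ := A.orderIsoOfFin hAcard with hσ
  refine ⟨fun i => if h : i < m then x ((σ ⟨i, h⟩ : ℕ)) else 0, ?_, ?_, b, ?_⟩
  · intro i hi
    dsimp only
    rw [dif_pos hi]
    exact hxS _ (hAlt _ (σ ⟨i, hi⟩).2)
  · intro i j hij hj
    have hi : i < m := by omega
    dsimp only
    rw [dif_pos hi, dif_pos hj]
    have hlt : σ ⟨i, hi⟩ < σ ⟨j, hj⟩ := by
      apply σ.strictMono
      exact Fin.mk_lt_mk.mpr hij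
    exact hxmono _ _ hlt (hAlt _ (σ ⟨j, hj⟩).2)
  · intro i j l hij hjl hl
    have hi : i < m := by omega
    have hj : j < m := by omega
    dsimp only
    rw [dif_pos hi, dif_pos hj, dif_pos hl]
    have h1 : σ ⟨i, hi⟩ < σ ⟨j, hj⟩ := σ.strictMono (Fin.mk_lt_mk.mpr hij)
    have h2 : σ ⟨j, hj⟩ < σ ⟨l, hl⟩ := σ.strictMono (Fin.mk_lt_mk.mpr hjl)
    rw [htriple _ _ _ h1 h2 (hAlt _ (σ ⟨l, hl⟩).2)]
    exact hb _ (σ ⟨i, hi⟩).2 _ (σ ⟨j, hj⟩).2 h1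

lemma part4 (k : ℕ) : ∃ n : ℕ, n > k ∧
    ∀ C : Sym2 (EHVert n) → Bool, HasMonoCopy (EHShift k) (EHShift n) C := by
  obtain ⟨N, hN⟩ := tripleRamsey (2 ^ k + 1)
  set n := max (k + 1) N with hn
  refine ⟨n, lt_of_lt_of_le (Nat.lt_succ_self k) (le_max_left _ _), fun C => ?_⟩
  classical
  set c : ℕ → ℕ → ℕ → Bool := fun a b e =>
    if h : 1 ≤ a ∧ a < b ∧ b < e ∧ e ≤ 2 ^ n + 1 then
      C s(⟨(a, b), ⟨h.1, h.2.1, by omega⟩⟩, ⟨(b, e), ⟨by omega, h.2.2.1, h.2.2.2⟩⟩)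
    else false with hc
  have hcard : N ≤ (Finset.Icc 1 (2 ^ n + 1)).card := by
    rw [Nat.card_Icc]
    have h1 : n < 2 ^ n := Nat.lt_two_pow_self
    have h2 : N ≤ n := le_max_right _ _
    omega
  obtain ⟨z, hzS, hzmono, b, hb⟩ := hN c _ hcard
  have hzmem : ∀ i, i < 2 ^ k + 1 → 1 ≤ z i ∧ z i ≤ 2 ^ n + 1 := by
    intro i hi
    have := hzS i hi
    rw [Finset.mem_Icc] at this
    exact this
  have hzinj : ∀ a b, a < 2 ^ k + 1 → b < 2 ^ k + 1 → z a = z b → a = b := by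
    intro a b ha hb' h
    rcases lt_trichotomy a b with h' | h' | h'
    · exact absurd h (ne_of_lt (hzmono a b h' hb'))
    · exact h'
    · exact absurd h (ne_of_gt (hzmono b a h' ha))
  refine ⟨fun v => ⟨(z (v.val.1 - 1), z (v.val.2 - 1)), ?_⟩, ?_, ?_, b, ?_⟩
  · obtain ⟨h1, h2, h3⟩ := v.2
    exact ⟨(hzmem _ (by omega)).1, hzmono _ _ (by omega) (by omega), (hzmem _ (by omega)).2⟩
  · intro u v huv
    have huv' := congrArg Subtype.val huv
    simp only [Prod.mk.injEq] at huv'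
    obtain ⟨h1, h2, h3⟩ := u.2
    obtain ⟨h4, h5, h6⟩ := v.2
    have e1 := hzinj _ _ (by omega) (by omega) huv'.1
    have e2 := hzinj _ _ (by omega) (by omega) huv'.2
    exact Subtype.ext (Prod.ext (by omega) (by omega))
  · intro u v hadj
    rcases hadj with h | h
    · exact Or.inl (congrArg (fun a => z (a - 1)) h)
    · exact Or.inr (congrArg (fun a => z (a - 1)) h)
  · intro u v hadj
    rw [ehAdj] at hadj
    obtain ⟨⟨i, j⟩, hu1, hu2, hu3⟩ := u
    obtain ⟨⟨l, m⟩, hv1, hv2, hv3⟩ := v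
    simp only at hadj hu1 hu2 hu3 hv1 hv2 hv3
    dsimp only
    rcases hadj with h | h
    · -- j = l
      subst h
      have hval : 1 ≤ z (i - 1) ∧ z (i - 1) < z (j - 1) ∧ z (j - 1) < z (m - 1) ∧
          z (m - 1) ≤ 2 ^ n + 1 :=
        ⟨(hzmem _ (by omega)).1, hzmono _ _ (by omega) (by omega),
          hzmono _ _ (by omega) (by omega), (hzmem _ (by omega)).2⟩
      have hcc := hb (i - 1) (j - 1) (m - 1) (by omega) (by omega) (by omega)
      rw [hc] at hcc
      dsimp only at hcc
      rw [dif_pos hval] at hcc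
      rw [← hcc]
    · -- m = i
      subst h
      have hval : 1 ≤ z (l - 1) ∧ z (l - 1) < z (m - 1) ∧ z (m - 1) < z (j - 1) ∧
          z (j - 1) ≤ 2 ^ n + 1 :=
        ⟨(hzmem _ (by omega)).1, hzmono _ _ (by omega) (by omega),
          hzmono _ _ (by omega) (by omega), (hzmem _ (by omega)).2⟩
      have hcc := hb (l - 1) (m - 1) (j - 1) (by omega) (by omega) (by omega)
      rw [hc] at hcc
      dsimp only at hcc
      rw [dif_pos hval] at hcc
      rw [← hcc]; exact congrArg C Sym2.eq_swap

/-- The Erdős–Hajnal shift graphs form an ascending Ramsey sequence with bounded clique numbers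
(`ω(G k) = 2`) and chromatic numbers tending to infinity (`χ(G k) = k + 1`): for every positive
integer `k`, `G k` is isomorphic to a proper subgraph of `G (k + 1)`; `ω(G k) = 2`;
`χ(G k) = k + 1`; and there is `n > k` such that every red-blue edge coloring of `G n`
contains a monochromatic subgraph isomorphic to `G k`. -/
theorem ehShift_solution_of_open_problem :
    ∀ k : ℕ, 1 ≤ k →
      (∃ H : (EHShift (k + 1)).Subgraph, H ≠ ⊤ ∧ Nonempty (EHShift k ≃g H.coe)) ∧
      (EHShift k).cliqueNum = 2 ∧
      (EHShift k).chromaticNumber = (k + 1 : ℕ) ∧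
      ∃ n : ℕ, n > k ∧
        ∀ C : Sym2 (EHVert n) → Bool, HasMonoCopy (EHShift k) (EHShift n) C := by
  intro k hk
  exact ⟨part1 k, part2 k hk, part3 k, part4 k⟩
end

section
/- Let {G_k} be a Ramsey sequence of graphs. Then either every graph G_k in the sequence is bipartite, or the chromatic numbers χ(G_k) tend to infinity as k → ∞ (equivalently, the chromatic numbers of the G_k are unbounded). -/
/-- Key lemma: if every 2-coloring of `H` contains a monochromatic copy of `G`, and
`H` is `t * t`-colorable, then `G` is `t`-colorable. -/
lemma mono_colorable_aux {V W : Type*} (G : SimpleGraph V) (H : SimpleGraph W) (t : ℕ)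
    (h : ∀ C : Sym2 W → Bool, HasMonoCopy G H C) (hc : H.Colorable (t * t)) :
    G.Colorable t := by
  obtain ⟨c⟩ := hc
  set d : W → Fin t × Fin t := fun w => finProdFinEquiv.symm (c w) with hd
  have hdvalid : ∀ {u v : W}, H.Adj u v → d u ≠ d v := by
    intro u v huv h'
    exact c.valid huv (finProdFinEquiv.symm.injective h')
  set C : Sym2 W → Bool :=
    Sym2.lift ⟨fun u v => decide ((d u).1 = (d v).1), by
      intro a b; simp [eq_comm]⟩ with hC
  obtain ⟨f, hinj, hadj, b, hb⟩ := h C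
  have hCval : ∀ u v : W, C s(u, v) = decide ((d u).1 = (d v).1) := by
    intro u v; rfl
  cases b with
  | true =>
    refine ⟨SimpleGraph.Coloring.mk (fun u => (d (f u)).2) ?_⟩
    intro u v huv h'
    have h1 : (d (f u)).1 = (d (f v)).1 := by
      have := hb u v huv
      rw [hCval] at this
      exact of_decide_eq_true this
    exact hdvalid (hadj u v huv) (Prod.ext h1 h')
  | false =>
    refine ⟨SimpleGraph.Coloring.mk (fun u => (d (f u)).1) ?_⟩
    intro u v huv h'
    have := hb u v huv
    rw [hCval] at this
    exact absurd (decide_eq_true h') (by simp [this])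

/-- If `{G k}` is a Ramsey sequence (an ascending sequence of finite graphs such that for every
`k` there is `n > k` with every red-blue edge coloring of `G n` containing a monochromatic
subgraph isomorphic to `G k`), then either every `G k` is bipartite, or the chromatic numbers
of the `G k` are unbounded. -/
theorem ramsey_sequence_bipartite_or_unbounded_chromatic {V : ℕ → Type} [∀ k, Fintype (V k)]
    (G : ∀ k, SimpleGraph (V k))
    (hasc : ∀ k, ∃ H : (G (k + 1)).Subgraph, H ≠ ⊤ ∧ Nonempty (G k ≃g H.coe))
    (hram : ∀ k, ∃ n, n > k ∧ ∀ C : Sym2 (V n) → Bool, HasMonoCopy (G k) (G n) C) :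
    (∀ k, (G k).Colorable 2) ∨ (∀ m : ℕ, ∃ k, (m : ℕ∞) ≤ (G k).chromaticNumber) := by
  by_cases hbip : ∀ k, (G k).Colorable 2
  · exact Or.inl hbip
  · right
    push_neg at hbip
    obtain ⟨k₀, hk₀⟩ := hbip
    -- For every j, some G k is not 2^(2^j)-colorable.
    have key : ∀ j : ℕ, ∃ k, ¬ (G k).Colorable (2 ^ 2 ^ j) := by
      intro j
      induction j with
      | zero => exact ⟨k₀, by simpa using hk₀⟩
      | succ j ih =>
        obtain ⟨k, hk⟩ := ih
        obtain ⟨n, _, hmono⟩ := hram k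
        refine ⟨n, fun hcol => hk ?_⟩
        have heq : 2 ^ 2 ^ (j + 1) = 2 ^ 2 ^ j * 2 ^ 2 ^ j := by
          rw [← pow_add]; congr 1; ring
        rw [heq] at hcol
        exact mono_colorable_aux (G k) (G n) _ hmono hcol
    intro m
    obtain ⟨k, hk⟩ := key m
    refine ⟨k, ?_⟩
    have hnc : ¬ (G k).Colorable m := fun h =>
      hk (h.mono (le_trans (Nat.le_of_lt (Nat.lt_two_pow_self (n := m)))
        (Nat.pow_le_pow_right (by norm_num) (Nat.le_of_lt (Nat.lt_two_pow_self (n := m))))))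
    rw [← SimpleGraph.chromaticNumber_le_iff_colorable] at hnc
    exact le_of_not_ge hnc
end

section
/- Let {G_k} be an ascending sequence of graphs for which the clique numbers tend to infinity, i.e., lim_{k→∞} ω(G_k) = ∞ (equivalently, for every m there exists k such that G_k contains a clique of size m). Then {G_k} is a Ramsey sequence: for every k there exists n > k such that every 2-coloring (red/blue) of the edges of G_n contains a monochromatic subgraph isomorphic to G_k. -/
open Finset

lemma ramsey_two (a : ℕ) : ∀ b : ℕ, ∃ R : ℕ, ∀ {α : Type} (s : Finset α) (C : Sym2 α → Bool),
    R ≤ s.card →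
    (∃ t ⊆ s, a ≤ t.card ∧ ∀ u ∈ t, ∀ v ∈ t, u ≠ v → C s(u, v) = true) ∨
    (∃ t ⊆ s, b ≤ t.card ∧ ∀ u ∈ t, ∀ v ∈ t, u ≠ v → C s(u, v) = false) := by
  induction a with
  | zero =>
    intro b
    exact ⟨0, fun s C _ => Or.inl ⟨∅, empty_subset s, by simp⟩⟩
  | succ a iha =>
    intro b
    induction b with
    | zero =>
      exact ⟨0, fun s C _ => Or.inr ⟨∅, empty_subset s, by simp⟩⟩
    | succ b ihb =>
      obtain ⟨R1, h1⟩ := iha (b + 1)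
      obtain ⟨R2, h2⟩ := ihb
      refine ⟨R1 + R2 + 1, fun {α} s C hcard => ?_⟩
      classical
      have hne : s.Nonempty := card_pos.mp (by omega)
      obtain ⟨x, hx⟩ := hne
      set s' := s.erase x with hs'
      have hcard' : R1 + R2 ≤ s'.card := by
        rw [hs', card_erase_of_mem hx]
        omega
      set A := s'.filter (fun y => C s(x, y) = true) with hA
      set B := s'.filter (fun y => ¬ C s(x, y) = true) with hB
      have hAB : A.card + B.card = s'.card := card_filter_add_card_filter_not _
      have hAs : A ⊆ s' := filter_subset _ _
      have hBs : B ⊆ s' := filter_subset _ _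
      rcases le_or_gt R1 A.card with hR1 | hR1
      · rcases h1 A C hR1 with ⟨t, hts, htc, htm⟩ | ⟨t, hts, htc, htm⟩
        · -- grow with x
          refine Or.inl ⟨insert x t, ?_, ?_, ?_⟩
          · intro y hy
            rcases mem_insert.mp hy with rfl | hy
            · exact hx
            · exact erase_subset _ _ (hAs (hts hy))
          · have hxt : x ∉ t := fun h => (mem_erase.mp (hAs (hts h))).1 rfl
            rw [card_insert_of_notMem hxt]; omega
          · intro u hu v hv huv
            rcases mem_insert.mp hu with hux | hu' <;> rcases mem_insert.mp hv with hvx | hv'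
            · exact absurd (hux.trans hvx.symm) huv
            · subst hux; exact (mem_filter.mp (hts hv')).2
            · subst hvx; rw [Sym2.eq_swap]; exact (mem_filter.mp (hts hu')).2
            · exact htm u hu' v hv' huv
        · exact Or.inr ⟨t, hts.trans (hAs.trans (erase_subset _ _)), htc, htm⟩
      · have hR2 : R2 ≤ B.card := by omega
        rcases h2 B C hR2 with ⟨t, hts, htc, htm⟩ | ⟨t, hts, htc, htm⟩
        · exact Or.inl ⟨t, hts.trans (hBs.trans (erase_subset _ _)), htc, htm⟩
        · refine Or.inr ⟨insert x t, ?_, ?_, ?_⟩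
          · intro y hy
            rcases mem_insert.mp hy with rfl | hy
            · exact hx
            · exact erase_subset _ _ (hBs (hts hy))
          · have hxt : x ∉ t := fun h => (mem_erase.mp (hBs (hts h))).1 rfl
            rw [card_insert_of_notMem hxt]; omega
          · intro u hu v hv huv
            rcases mem_insert.mp hu with hux | hu' <;> rcases mem_insert.mp hv with hvx | hv'
            · exact absurd (hux.trans hvx.symm) huv
            · subst hux; simpa using (mem_filter.mp (hts hv')).2
            · subst hvx; rw [Sym2.eq_swap]; simpa using (mem_filter.mp (hts hu')).2
            · exact htm u hu' v hv' huv

lemma ramsey_sym (N : ℕ) : ∃ R : ℕ, ∀ {α : Type} (s : Finset α) (C : Sym2 α → Bool),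
    R ≤ s.card → ∃ t ⊆ s, ∃ c, N ≤ t.card ∧ ∀ u ∈ t, ∀ v ∈ t, u ≠ v → C s(u, v) = c := by
  obtain ⟨R, hR⟩ := ramsey_two N N
  refine ⟨R, fun s C hc => ?_⟩
  rcases hR s C hc with ⟨t, hts, htc, htm⟩ | ⟨t, hts, htc, htm⟩
  exacts [⟨t, hts, true, htc, htm⟩, ⟨t, hts, false, htc, htm⟩]

lemma chain_emb {V : ℕ → Type} (G : ∀ k, SimpleGraph (V k))
    (hasc : ∀ k, ∃ H : (G (k + 1)).Subgraph, H ≠ ⊤ ∧ Nonempty (G k ≃g H.coe))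
    {k n : ℕ} (h : k ≤ n) :
    ∃ f : V k → V n, Function.Injective f ∧ ∀ u v, (G k).Adj u v → (G n).Adj (f u) (f v) := by
  induction n, h using Nat.le_induction with
  | base => exact ⟨id, fun _ _ h => h, fun _ _ h => h⟩
  | succ n hn ih =>
    obtain ⟨f, hfi, hfa⟩ := ih
    obtain ⟨H, -, ⟨e⟩⟩ := hasc n
    refine ⟨fun v => (e (f v) : V (n + 1)), ?_, ?_⟩
    · exact Subtype.val_injective.comp (e.injective.comp hfi)
    · intro u v huv
      exact H.adj_sub (e.map_adj_iff.mpr (hfa u v huv))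

/-- If `{G k}` is an ascending sequence of finite graphs whose clique numbers tend to infinity
(for every `m` some `G k` contains a clique of size `m`), then `{G k}` is a Ramsey sequence. -/
theorem ramsey_of_clique_unbounded {V : ℕ → Type} [∀ k, Fintype (V k)]
    (G : ∀ k, SimpleGraph (V k))
    (hasc : ∀ k, ∃ H : (G (k + 1)).Subgraph, H ≠ ⊤ ∧ Nonempty (G k ≃g H.coe))
    (hclique : ∀ m : ℕ, ∃ k, ∃ s : Finset (V k), (G k).IsNClique m s) :
    ∀ k, ∃ n, n > k ∧ ∀ C : Sym2 (V n) → Bool, HasMonoCopy (G k) (G n) C := by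
  intro k
  classical
  obtain ⟨R, hR⟩ := ramsey_sym (Fintype.card (V k))
  obtain ⟨j, s, hs⟩ := hclique R
  refine ⟨max (k + 1) j, by omega, ?_⟩
  obtain ⟨g, hgi, hga⟩ := chain_emb G hasc (le_max_right (k + 1) j)
  intro C
  have hs'card : R ≤ (s.image g).card := by
    rw [Finset.card_image_of_injective _ hgi, hs.2]
  have hs'adj : ∀ u ∈ s.image g, ∀ v ∈ s.image g, u ≠ v → (G (max (k + 1) j)).Adj u v := by
    intro u hu v hv huv
    obtain ⟨a, ha, rfl⟩ := Finset.mem_image.mp hu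
    obtain ⟨b, hb, rfl⟩ := Finset.mem_image.mp hv
    exact hga a b (hs.1 ha hb (fun h => huv (by rw [h])))
  obtain ⟨t, hts, c, htc, htm⟩ := hR (s.image g) C hs'card
  have hcard : Fintype.card (V k) ≤ Fintype.card {x // x ∈ t} := by
    rwa [Fintype.card_coe]
  obtain ⟨emb⟩ := Function.Embedding.nonempty_of_card_le hcard
  refine ⟨fun v => (emb v : V (max (k + 1) j)), Subtype.val_injective.comp emb.injective, ?_, c, ?_⟩
  · intro u v huv
    have hne : (emb u : V (max (k + 1) j)) ≠ (emb v : V (max (k + 1) j)) := by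
      intro h
      exact huv.ne (emb.injective (Subtype.val_injective h))
    exact hs'adj _ (hts (emb u).2) _ (hts (emb v).2) hne
  · intro u v huv
    have hne : (emb u : V (max (k + 1) j)) ≠ (emb v : V (max (k + 1) j)) := by
      intro h
      exact huv.ne (emb.injective (Subtype.val_injective h))
    exact htm _ (emb u).2 _ (emb v).2 hne
end
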